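/- arXiv:1709.00313 — 8 statements merged into one kernel-verified Lean document; each statement's English description precedes it below -/
import Mathlib

section
/- Let P = (X, ≺) be a finite poset, k a positive integer, and ε a real number with 0 < ε < 1/(2|X|). If P has a [1,k]-interval representation, then the weighted digraph G_{P,k} contains no negative cycle. -/
/-- A weighted digraph on vertex set `V`: an adjacency (arc) relation and a
real weight on each (potential) arc. -/
structure WeightedDigraph (V : Type*) where
  Adj : V → V → Prop
  w : V → V → ℝ

/-- A potential function: `p y - p x ≤ w x y` for every arc `(x, y)`. -/
def WeightedDigraph.IsPotential {V : Type*} (G : WeightedDigraph V) (p : V → ℝ) : Prop :=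
  ∀ u v, G.Adj u v → p v - p u ≤ G.w u v

/-- Cyclic successor of an index. -/
def finNext {n : ℕ} (i : Fin n) : Fin n := ⟨(i + 1) % n, Nat.mod_lt _ i.pos⟩

/-- A cycle: a nonempty list of distinct vertices, with an arc from each
vertex to the (cyclically) next one. -/
def WeightedDigraph.IsCycle {V : Type*} (G : WeightedDigraph V) (c : List V) : Prop :=
  c ≠ [] ∧ c.Nodup ∧ ∀ i : Fin c.length, G.Adj (c.get i) (c.get (finNext i))

/-- The weight of a cycle: the sum of its arc weights. -/
def WeightedDigraph.cycleWeight {V : Type*} (G : WeightedDigraph V) (c : List V) : ℝ :=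
  ∑ i : Fin c.length, G.w (c.get i) (c.get (finNext i))

/-- `G` has a negative cycle. -/
def WeightedDigraph.HasNegCycle {V : Type*} (G : WeightedDigraph V) : Prop :=
  ∃ c : List V, G.IsCycle c ∧ G.cycleWeight c < 0

/-- `x` and `y` are distinct and incomparable. -/
def Incomp {X : Type*} [PartialOrder X] (x y : X) : Prop :=
  x ≠ y ∧ ¬ x < y ∧ ¬ y < x

/-- The weighted digraph `G_{P,k}` associated to the finite poset `X` and the
parameters `k` and `ε`.  The left copy `Sum.inl x` plays the role of `ℓ_x`,
and the right copy `Sum.inr x` plays the role of `r_x`.  Arcs: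
`(ℓ_y, r_x)` of weight `-ε` when `x ≺ y`; `(ℓ_x, r_x)` of weight `k`;
`(r_x, ℓ_y)` of weight `0` when `x, y` are distinct and incomparable;
`(r_x, ℓ_x)` of weight `-1`. -/
def GPk (X : Type*) [PartialOrder X] [DecidableEq X] (k : ℕ) (ε : ℝ) :
    WeightedDigraph (X ⊕ X) where
  Adj u v :=
    match u, v with
    | .inl y, .inr x => x < y ∨ x = y
    | .inr x, .inl y => Incomp x y ∨ x = y
    | _, _ => False
  w u v :=
    match u, v with
    | .inl y, .inr x => if x = y then (k : ℝ) else -ε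
    | .inr x, .inl y => if x = y then -1 else 0
    | _, _ => 0

/-- `L, R` give an interval representation of the poset `X`: each `x` gets the
closed interval `[L x, R x]`, and `x ≺ y` iff the interval of `x` lies
entirely to the left of the interval of `y`. -/
def IsIntervalRep {X : Type*} [PartialOrder X] (L R : X → ℝ) : Prop :=
  (∀ x, L x ≤ R x) ∧ ∀ x y, x < y ↔ R x < L y

/-- The poset `X` has an interval representation with all lengths in `[1, k]`. -/
def HasIntervalRep1k (X : Type*) [PartialOrder X] (k : ℕ) : Prop :=
  ∃ L R : X → ℝ, IsIntervalRep L R ∧ ∀ x, 1 ≤ R x - L x ∧ R x - L x ≤ (k : ℝ)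

/-- `X` contains an induced copy of `2 + 2`: elements `a, b, c, d` whose only
comparabilities are `a ≺ c` and `b ≺ d`. -/
def HasInduced22 (X : Type*) [PartialOrder X] : Prop :=
  ∃ a b c d : X, a < c ∧ b < d ∧ Incomp a b ∧ Incomp a d ∧ Incomp b c ∧ Incomp c d

/-- `X` contains an induced copy of `n + 1`: a chain `a 0 ≺ a 1 ≺ ⋯ ≺ a (n-1)`
together with an element `x` incomparable to every element of the chain. -/
def HasInducedChainPlus1 (X : Type*) [PartialOrder X] (n : ℕ) : Prop :=
  ∃ (a : ℕ → X) (x : X), (∀ i j, i < j → j < n → a i < a j) ∧ ∀ i < n, Incomp x (a i)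


/-- Integer part of the arc weights of `G_{P,k}` (with `-ε` replaced by `0`). -/
def w0aux {X : Type*} [DecidableEq X] (k : ℕ) : X ⊕ X → X ⊕ X → ℤ
  | .inl y, .inr x => if x = y then (k : ℤ) else 0
  | .inr x, .inl y => if x = y then -1 else 0
  | _, _ => 0

/-- The `ε`-part of the arc weights of `G_{P,k}`. -/
def eaux {X : Type*} [DecidableEq X] (ε : ℝ) : X ⊕ X → X ⊕ X → ℝ
  | .inl y, .inr x => if x = y then 0 else ε
  | _, _ => 0

lemma w_eq_w0_sub_e {X : Type*} [PartialOrder X] [DecidableEq X] (k : ℕ) (ε : ℝ)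
    (u v : X ⊕ X) : (GPk X k ε).w u v = (w0aux k u v : ℝ) - eaux ε u v := by
  rcases u with y | x <;> rcases v with y' | x' <;>
    simp [GPk, w0aux, eaux] <;> split <;> simp

lemma eaux_bounds {X : Type*} [DecidableEq X] {ε : ℝ} (hε : 0 ≤ ε) (u v : X ⊕ X) :
    0 ≤ eaux ε u v ∧ eaux ε u v ≤ ε := by
  rcases u with y | x <;> rcases v with y' | x' <;> simp only [eaux] <;>
    try exact ⟨le_rfl, hε⟩
  split_ifs
  · exact ⟨le_rfl, hε⟩
  · exact ⟨hε, le_rfl⟩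

lemma arc_bound {X : Type*} [PartialOrder X] [DecidableEq X] (k : ℕ) (ε : ℝ)
    (L R : X → ℝ) (hrep : IsIntervalRep L R)
    (hlen : ∀ x, 1 ≤ R x - L x ∧ R x - L x ≤ (k : ℝ))
    {u v : X ⊕ X} (h : (GPk X k ε).Adj u v) :
    Sum.elim L R v - Sum.elim L R u ≤ (w0aux k u v : ℝ) ∧
      (eaux ε u v ≠ 0 → Sum.elim L R v - Sum.elim L R u < (w0aux k u v : ℝ)) := by
  obtain ⟨hLR, hord⟩ := hrep
  match u, v with
  | .inl y, .inr x =>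
    rcases h with h | h
    · have hne : x ≠ y := ne_of_lt h
      have hxy := (hord x y).mp h
      simp only [w0aux, eaux, if_neg hne, Sum.elim_inl, Sum.elim_inr, Int.cast_zero]
      exact ⟨by linarith, fun _ => by linarith⟩
    · subst h
      have := (hlen x).2
      simp only [w0aux, eaux, Sum.elim_inl, Sum.elim_inr]
      norm_num
      linarith
  | .inr x, .inl y =>
    rcases h with h | h
    · obtain ⟨hne, hxy, hyx⟩ := h
      have hle : L y ≤ R x := not_lt.mp fun hc => hxy ((hord x y).mpr hc)
      simp only [w0aux, eaux, if_neg hne, Sum.elim_inl, Sum.elim_inr, Int.cast_zero]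
      exact ⟨by linarith only [hle], fun hc => absurd rfl hc⟩
    · subst h
      have := (hlen x).1
      simp only [w0aux, eaux, Sum.elim_inl, Sum.elim_inr]
      norm_num
      linarith
  | .inl _, .inl _ => exact absurd h (by simp [GPk])
  | .inr _, .inr _ => exact absurd h (by simp [GPk])

/-- If `P` has a `[1,k]`-interval representation, then `G_{P,k}` has no
negative cycle. -/
theorem no_negCycle_of_hasIntervalRep1k
    {X : Type*} [Fintype X] [PartialOrder X] [DecidableEq X] (k : ℕ) (hk : 0 < k)
    (ε : ℝ) (hε0 : 0 < ε) (hε1 : ε < 1 / (2 * Fintype.card X))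
    (h : HasIntervalRep1k X k) :
    ¬ (GPk X k ε).HasNegCycle := by
  rintro ⟨c, ⟨hne, hnd, hadj⟩, hneg⟩
  obtain ⟨L, R, hrep, hlen⟩ := h
  have hcard : 0 < Fintype.card X := by
    rcases Nat.eq_zero_or_pos (Fintype.card X) with h0 | h0
    · rw [h0] at hε1; norm_num at hε1; linarith
    · exact h0
  haveI : NeZero c.length := ⟨(List.length_pos_iff.mpr hne).ne'⟩
  set p : X ⊕ X → ℝ := Sum.elim L R with hp
  have hnext : ∀ i : Fin c.length, finNext i = i + 1 := by
    intro i
    ext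
    simp [finNext, Fin.add_def, Fin.val_one', Nat.add_mod]
  have htel : ∑ i : Fin c.length, (p (c.get (finNext i)) - p (c.get i)) = 0 := by
    rw [Finset.sum_sub_distrib]
    have : ∑ i : Fin c.length, p (c.get (finNext i)) = ∑ i : Fin c.length, p (c.get i) := by
      simp_rw [hnext]
      exact Fintype.sum_equiv (Equiv.addRight (1 : Fin c.length)) _ _ (fun i => rfl)
    rw [this, sub_self]
  have hbound := fun i : Fin c.length => arc_bound k ε L R hrep hlen (hadj i)
  set f : Fin c.length → ℝ := fun i => p (c.get (finNext i)) - p (c.get i) with hf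
  set g : Fin c.length → ℝ := fun i => (w0aux k (c.get i) (c.get (finNext i)) : ℝ) with hg
  set e : Fin c.length → ℝ := fun i => eaux ε (c.get i) (c.get (finNext i)) with he
  have hsplit : (GPk X k ε).cycleWeight c = (∑ i, g i) - ∑ i, e i := by
    unfold WeightedDigraph.cycleWeight
    rw [← Finset.sum_sub_distrib]
    exact Finset.sum_congr rfl fun i _ => w_eq_w0_sub_e k ε _ _
  have hS0 : (0 : ℝ) ≤ ∑ i, g i := by
    rw [← htel]
    exact Finset.sum_le_sum fun i _ => (hbound i).1
  have hEle : ∑ i, e i ≤ (c.length : ℝ) * ε := by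
    calc ∑ i, e i ≤ ∑ _i : Fin c.length, ε :=
          Finset.sum_le_sum fun i _ => (eaux_bounds hε0.le _ _).2
      _ = (c.length : ℝ) * ε := by simp [mul_comm]
  have hlenle : (c.length : ℝ) ≤ 2 * (Fintype.card X : ℝ) := by
    have := hnd.length_le_card
    rw [Fintype.card_sum] at this
    push_cast
    exact_mod_cast by omega
  have hεcard : ε * (2 * (Fintype.card X : ℝ)) < 1 := by
    have h2 : (0 : ℝ) < 2 * (Fintype.card X : ℝ) := by positivity
    have := (lt_div_iff₀ h2).mp (by exact_mod_cast hε1)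
    linarith
  have hEsmall : ∑ i, e i < 1 := by
    have : (c.length : ℝ) * ε ≤ 2 * (Fintype.card X : ℝ) * ε :=
      mul_le_mul_of_nonneg_right hlenle hε0.le
    nlinarith
  by_cases hE : ∑ i, e i = 0
  · rw [hsplit, hE, sub_zero] at hneg
    linarith
  · have hex : ∃ i ∈ Finset.univ, e i ≠ 0 := by
      by_contra hh
      push_neg at hh
      exact hE (Finset.sum_eq_zero fun i hi => hh i hi)
    obtain ⟨i0, _, hi0⟩ := hex
    have hstrict : (0 : ℝ) < ∑ i, g i := by
      rw [← htel]
      exact Finset.sum_lt_sum (fun i _ => (hbound i).1)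
        ⟨i0, Finset.mem_univ _, (hbound i0).2 hi0⟩
    have hint : ∑ i, g i = ((∑ i : Fin c.length,
        w0aux k (c.get i) (c.get (finNext i)) : ℤ) : ℝ) := by
      push_cast [hg]
      rfl
    have h1 : (1 : ℝ) ≤ ∑ i, g i := by
      rw [hint] at hstrict ⊢
      exact_mod_cast (by exact_mod_cast hstrict : (0:ℤ) < _)
    rw [hsplit] at hneg
    linarith
end

section
/- Let P = (X, ≺) be a finite poset, k a positive integer, and ε a real number with 0 < ε < 1/(2|X|). If the weighted digraph G_{P,k} contains no negative cycle, then P has a [1,k]-interval representation. -/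
namespace Aux

variable {V : Type*}

/-- path weight -/
def pw (w : V → V → ℝ) : List V → ℝ
  | [] => 0
  | [_] => 0
  | a :: b :: t => w a b + pw w (b :: t)

lemma pw_eq_sum (w : V → V → ℝ) (d : V) :
    ∀ c : List V, pw w c = ∑ i ∈ Finset.range (c.length - 1),
      w (c.getD i d) (c.getD (i + 1) d)
  | [] => by simp [pw]
  | [a] => by simp [pw]
  | a :: b :: t => by
    rw [pw, pw_eq_sum w d (b :: t)]
    have hlen : (a :: b :: t).length - 1 = ((b :: t).length - 1) + 1 := by simp
    rw [hlen, Finset.sum_range_succ']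
    simp [List.getD_cons_succ]
    ring

lemma pw_append_singleton (w : V → V → ℝ) :
    ∀ (c : List V) (hc : c ≠ []) (v : V),
      pw w (c ++ [v]) = pw w c + w (c.getLast hc) v
  | [], hc, v => absurd rfl hc
  | [a], _, v => by simp [pw]
  | a :: b :: t, _, v => by
    have IH := pw_append_singleton w (b :: t) (by simp) v
    simp only [List.cons_append] at IH ⊢
    rw [pw, pw, IH, List.getLast_cons (by simp : (b :: t) ≠ [])]
    ring

lemma pw_split (w : V → V → ℝ) :
    ∀ (c1 : List V) (v : V) (c2 : List V),
      pw w (c1 ++ v :: c2) = pw w (c1 ++ [v]) + pw w (v :: c2)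
  | [], v, c2 => by simp [pw]
  | [a], v, c2 => by simp [pw]
  | a :: b :: t, v, c2 => by
    have IH := pw_split w (b :: t) v c2
    simp only [List.cons_append] at IH ⊢
    rw [pw, pw, IH]
    ring

/-- A valid path in `G` ending at `v`. -/
def ValidPath (G : WeightedDigraph V) (c : List V) (v : V) : Prop :=
  ∃ hc : c ≠ [], c.Nodup ∧ c.Chain' G.Adj ∧ c.getLast hc = v

lemma cycleWeight_eq (G : WeightedDigraph V) (c : List V) (hc : c ≠ []) :
    G.cycleWeight c = pw G.w c + G.w (c.getLast hc) (c.head hc) := by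
  obtain ⟨d⟩ : Nonempty V := ⟨c.head hc⟩
  have hlpos : 0 < c.length := List.length_pos_iff.mpr hc
  obtain ⟨m, hm⟩ : ∃ m, c.length = m + 1 := ⟨c.length - 1, by omega⟩
  have hget : ∀ i : Fin c.length, c.get i = c.getD i.1 d := by
    intro i
    rw [List.getD_eq_getElem c d i.isLt]
    rfl
  have key : G.cycleWeight c
      = ∑ i ∈ Finset.range c.length,
          G.w (c.getD i d) (c.getD ((i + 1) % c.length) d) := by
    rw [WeightedDigraph.cycleWeight, ← Fin.sum_univ_eq_sum_range]
    refine Finset.sum_congr rfl fun i _ => ?_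
    rw [hget i, hget (finNext i)]
    rfl
  rw [key, hm, Finset.sum_range_succ]
  have h1 : ∀ i ∈ Finset.range m,
      G.w (c.getD i d) (c.getD ((i + 1) % (m + 1)) d)
        = G.w (c.getD i d) (c.getD (i + 1) d) := by
    intro i hi
    rw [Finset.mem_range] at hi
    rw [Nat.mod_eq_of_lt (by omega)]
  rw [Finset.sum_congr rfl h1]
  have h2 : pw G.w c = ∑ i ∈ Finset.range m, G.w (c.getD i d) (c.getD (i + 1) d) := by
    rw [pw_eq_sum G.w d c, hm]
    norm_num
  rw [← h2]
  have hml : m < c.length := by omega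
  have e1 : c.getD m d = c.getLast hc := by
    rw [List.getD_eq_getElem c d hml, List.getLast_eq_getElem]
    congr 1
    omega
  have e2 : c.getD ((m + 1) % (m + 1)) d = c.head hc := by
    rw [Nat.mod_self, List.getD_eq_getElem c d hlpos,
      List.head_eq_getElem_zero hc]
  rw [e1, e2]

lemma isCycle_of (G : WeightedDigraph V) (c : List V) (hc : c ≠ []) (hnd : c.Nodup)
    (hch : c.Chain' G.Adj) (hla : G.Adj (c.getLast hc) (c.head hc)) : G.IsCycle c := by
  refine ⟨hc, hnd, fun i => ?_⟩
  by_cases hi : i.1 + 1 < c.length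
  · have hfn : finNext i = ⟨i.1 + 1, hi⟩ := by
      simp only [finNext]
      congr 1
      exact Nat.mod_eq_of_lt hi
    rw [hfn]
    exact List.isChain_iff_getElem.mp hch i.1 (by omega)
  · have hieq : i.1 + 1 = c.length := by have := i.isLt; omega
    have hfn : finNext i = ⟨0, i.pos⟩ := by
      simp only [finNext]
      congr 1
      rw [hieq, Nat.mod_self]
    rw [hfn]
    have hgl : c.get i = c.getLast hc := by
      rw [List.getLast_eq_getElem]
      simp only [List.get_eq_getElem]
      congr 1
      omega
    have hh : c.get ⟨0, i.pos⟩ = c.head hc := by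
      simp only [List.get_eq_getElem]
      exact (List.head_eq_getElem_zero hc).symm
    rw [hgl, hh]
    exact hla

open scoped Classical in
/-- the shortest-simple-path potential -/
noncomputable def pot (G : WeightedDigraph V) (v : V) : ℝ :=
  sInf {r : ℝ | ∃ c : List V, ValidPath G c v ∧ pw G.w c = r}

variable [Fintype V]

lemma potSet_finite (G : WeightedDigraph V) (v : V) :
    {r : ℝ | ∃ c : List V, ValidPath G c v ∧ pw G.w c = r}.Finite := by
  have h1 : {c : List V | c.Nodup}.Finite := by
    classical
    exact Set.Finite.ofFinset
      ((@Finset.univ {l : List V // l.Nodup} fintypeNodupList).map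
        ⟨Subtype.val, Subtype.val_injective⟩) (by intro x; simp)
  have h2 : {r : ℝ | ∃ c : List V, ValidPath G c v ∧ pw G.w c = r}
      ⊆ (pw G.w) '' {c : List V | c.Nodup} := by
    rintro r ⟨c, ⟨hc, hnd, _⟩, hr⟩
    exact ⟨c, hnd, hr⟩
  exact (h1.image _).subset h2

lemma potSet_nonempty (G : WeightedDigraph V) (v : V) :
    {r : ℝ | ∃ c : List V, ValidPath G c v ∧ pw G.w c = r}.Nonempty :=
  ⟨pw G.w [v], [v], ⟨by simp, by simp, List.isChain_singleton v, by simp⟩, rfl⟩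

lemma pot_le (G : WeightedDigraph V) (v : V) (c : List V) (hc : ValidPath G c v) :
    pot G v ≤ pw G.w c :=
  csInf_le (potSet_finite G v).bddBelow ⟨c, hc, rfl⟩

lemma pot_attained (G : WeightedDigraph V) (v : V) :
    ∃ c : List V, ValidPath G c v ∧ pw G.w c = pot G v :=
  (potSet_nonempty G v).csInf_mem (potSet_finite G v)

lemma exists_potential (G : WeightedDigraph V) (h : ¬ G.HasNegCycle) :
    ∃ p : V → ℝ, G.IsPotential p := by
  refine ⟨pot G, fun u v huv => ?_⟩
  obtain ⟨c, ⟨hc, hnd, hch, hlast⟩, hw⟩ := pot_attained G u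
  by_cases hv : v ∈ c
  · -- decompose c = c1 ++ v :: c2
    obtain ⟨c1, c2, rfl⟩ := List.append_of_mem hv
    have hsuf : (v :: c2) <:+ (c1 ++ v :: c2) := ⟨c1, rfl⟩
    have hpre : (c1 ++ [v]) <+: (c1 ++ v :: c2) := ⟨c2, by simp⟩
    have hne2 : (v :: c2) ≠ [] := by simp
    have hlast2 : (v :: c2).getLast hne2 = u := by
      rw [← hlast]
      exact (List.getLast_append_of_right_ne_nil c1 (v :: c2) hne2).symm
    -- the closing cycle
    have hcyc : G.IsCycle (v :: c2) := by
      refine isCycle_of G _ hne2 (hnd.sublist hsuf.sublist) (hch.suffix hsuf) ?_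
      rw [hlast2]
      simpa using huv
    have hpos : 0 ≤ G.cycleWeight (v :: c2) := by
      by_contra hneg
      exact h ⟨v :: c2, hcyc, by linarith⟩
    rw [cycleWeight_eq G _ hne2, hlast2] at hpos
    simp only [List.head_cons] at hpos
    -- prefix path ending at v
    have hvp : ValidPath G (c1 ++ [v]) v := by
      refine ⟨by simp, hnd.sublist hpre.sublist, hch.prefix hpre, ?_⟩
      rw [List.getLast_append_of_right_ne_nil c1 [v] (by simp)]
      rfl
    have hle : pot G v ≤ pw G.w (c1 ++ [v]) := pot_le G v _ hvp
    have hsplit := pw_split G.w c1 v c2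
    rw [hsplit] at hw
    linarith
  · -- extend c by v
    have hvp : ValidPath G (c ++ [v]) v := by
      refine ⟨by simp, ?_, ?_, by rw [List.getLast_append_of_right_ne_nil c [v] (by simp)]; rfl⟩
      · rw [List.nodup_append]
        exact ⟨hnd, List.nodup_singleton v, by simpa using fun a (ha : a ∈ c) (hav : a = v) => hv (hav ▸ ha)⟩
      · rw [List.Chain', List.isChain_append]
        refine ⟨hch, List.isChain_singleton v, fun x hx y hy => ?_⟩
        rw [List.getLast?_eq_getLast hc] at hx
        simp at hx hy
        subst hx
        subst hy
        rw [hlast]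
        exact huv
    have hle : pot G v ≤ pw G.w (c ++ [v]) := pot_le G v _ hvp
    rw [pw_append_singleton G.w c hc v, hlast, hw] at hle
    linarith

end Aux

/-- If `G_{P,k}` has no negative cycle, then `P` has a `[1,k]`-interval
representation. -/
theorem hasIntervalRep1k_of_no_negCycle
    {X : Type*} [Fintype X] [PartialOrder X] [DecidableEq X] (k : ℕ) (hk : 0 < k)
    (ε : ℝ) (hε0 : 0 < ε) (hε1 : ε < 1 / (2 * Fintype.card X))
    (h : ¬ (GPk X k ε).HasNegCycle) :
    HasIntervalRep1k X k := by
  obtain ⟨p, hp⟩ := Aux.exists_potential (GPk X k ε) h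
  set L : X → ℝ := fun x => p (Sum.inl x) with hL
  set R : X → ℝ := fun x => p (Sum.inr x) with hR
  have h1 : ∀ x, 1 ≤ R x - L x := by
    intro x
    have := hp (Sum.inr x) (Sum.inl x) (Or.inr rfl)
    simp only [GPk] at this
    norm_num at this
    simp only [hL, hR]
    linarith
  have h2 : ∀ x, R x - L x ≤ (k : ℝ) := by
    intro x
    have := hp (Sum.inl x) (Sum.inr x) (Or.inr rfl)
    simp only [GPk] at this
    norm_num at this
    simp only [hL, hR]
    linarith
  have h3 : ∀ x y, x < y → R x ≤ L y - ε := by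
    intro x y hxy
    have := hp (Sum.inl y) (Sum.inr x) (Or.inl hxy)
    simp only [GPk, if_neg (ne_of_lt hxy)] at this
    simp only [hL, hR]
    linarith
  have h4 : ∀ x y, Incomp x y → L y ≤ R x := by
    intro x y hxy
    have := hp (Sum.inr x) (Sum.inl y) (Or.inl hxy)
    simp only [GPk, if_neg hxy.1] at this
    simp only [hL, hR]
    linarith
  refine ⟨L, R, ⟨fun x => by linarith [h1 x], fun x y => ?_⟩, fun x => ⟨h1 x, h2 x⟩⟩
  constructor
  · intro hxy
    have := h3 x y hxy
    linarith
  · intro hRxy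
    by_contra hnxy
    rcases eq_or_ne x y with rfl | hne
    · linarith only [h1 x, hRxy]
    · by_cases hyx : y < x
      · have h5 := h3 y x hyx
        linarith only [h1 x, h1 y, h5, hRxy, hε0]
      · have h5 := h4 x y ⟨hne, hnxy, hyx⟩
        linarith only [h5, hRxy]
end

section
/- Let P = (X, ≺) be a finite poset, k a positive integer, and ε a real number with 0 < ε < 1/(2|X|). If a potential function p exists on the weighted digraph G_{P,k}, then assigning to each x ∈ X the interval I_x = [p(ℓ_x), p(r_x)] yields a [1,k]-interval representation of P. -/
/-- If `p` is a potential function on `G_{P,k}`, then the intervals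
`[p ℓ_x, p r_x]` form a `[1,k]`-interval representation of `P`. -/
theorem potential_gives_intervalRep1k
    {X : Type*} [Fintype X] [PartialOrder X] [DecidableEq X] (k : ℕ) (hk : 0 < k)
    (ε : ℝ) (hε0 : 0 < ε) (hε1 : ε < 1 / (2 * Fintype.card X))
    (p : X ⊕ X → ℝ) (hp : (GPk X k ε).IsPotential p) :
    IsIntervalRep (fun x : X => p (Sum.inl x)) (fun x : X => p (Sum.inr x)) ∧
      ∀ x : X, 1 ≤ p (Sum.inr x) - p (Sum.inl x) ∧ p (Sum.inr x) - p (Sum.inl x) ≤ (k : ℝ) := by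
  have hself1 : ∀ x : X, p (Sum.inl x) - p (Sum.inr x) ≤ -1 := fun x => by
    have := hp (Sum.inr x) (Sum.inl x) (Or.inr rfl)
    simpa [GPk] using this
  have hselfk : ∀ x : X, p (Sum.inr x) - p (Sum.inl x) ≤ (k : ℝ) := fun x => by
    have := hp (Sum.inl x) (Sum.inr x) (Or.inr rfl)
    simpa [GPk] using this
  have hlt : ∀ x y : X, x < y → p (Sum.inr x) - p (Sum.inl y) ≤ -ε := fun x y h => by
    have := hp (Sum.inl y) (Sum.inr x) (Or.inl h)
    simpa [GPk, h.ne] using this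
  have hinc : ∀ x y : X, Incomp x y → p (Sum.inl y) - p (Sum.inr x) ≤ 0 := fun x y h => by
    have := hp (Sum.inr x) (Sum.inl y) (Or.inl h)
    rw [GPk] at this
    simp only [if_neg h.1] at this
    linarith
  refine ⟨⟨fun x => by linarith [hself1 x], fun x y => ?_⟩,
    fun x => ⟨by linarith [hself1 x], hselfk x⟩⟩
  constructor
  · intro h; linarith [hlt x y h]
  · intro h
    by_cases hxy : x < y
    · exact hxy
    exfalso
    by_cases heq : x = y
    · subst heq
      have := hself1 x
      clear hxy; linarith
    by_cases hxy2 : y < x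
    · have h1 := hlt y x hxy2
      have h2 := hself1 x
      have h3 := hself1 y
      clear hxy heq hxy2; linarith
    · have h1 := hinc x y ⟨heq, hxy, hxy2⟩
      clear hxy heq hxy2; linarith
end

section
/- Let P = (X, ≺) be a finite poset, k a positive integer, and ε a real number with 0 < ε < 1/(2|X|). If P contains four elements a, b, x, y inducing a 2+2 (i.e., a ≺ x and b ≺ y are the only comparabilities among them), then ℓ_x → r_a → ℓ_y → r_b → ℓ_x is a cycle in the weighted digraph G_{P,k} of total weight −2ε; in particular G_{P,k} contains a negative cycle. -/
lemma weight4 {V : Type*} (G : WeightedDigraph V) (v0 v1 v2 v3 : V) :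
    G.cycleWeight [v0,v1,v2,v3] = G.w v0 v1 + G.w v1 v2 + G.w v2 v3 + G.w v3 v0 := by
  show ∑ i : Fin 4, G.w ([v0,v1,v2,v3].get i) ([v0,v1,v2,v3].get (finNext i)) = _
  rw [Fin.sum_univ_four]
  norm_num [finNext, show ((3:Fin 4):ℕ) = 3 from rfl]

lemma cycle4 {V : Type*} (G : WeightedDigraph V) (v0 v1 v2 v3 : V)
    (hnd : ([v0,v1,v2,v3] : List V).Nodup)
    (h01 : G.Adj v0 v1) (h12 : G.Adj v1 v2) (h23 : G.Adj v2 v3) (h30 : G.Adj v3 v0) :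
    G.IsCycle [v0,v1,v2,v3] := by
  refine ⟨by simp, hnd, ?_⟩
  have : ∀ i : Fin 4, G.Adj ([v0,v1,v2,v3].get i) ([v0,v1,v2,v3].get (finNext i)) := by
    intro i
    fin_cases i
    · simpa [finNext] using h01
    · simpa [finNext] using h12
    · simpa [finNext] using h23
    · simpa [finNext] using h30
  exact this

/-- An induced `2+2` on elements `a, b, x, y` (with `a ≺ x`, `b ≺ y` the only
comparabilities) yields the cycle `ℓ_x → r_a → ℓ_y → r_b → ℓ_x` in `G_{P,k}`,
of total weight `-2ε`; in particular `G_{P,k}` has a negative cycle. -/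
theorem induced22_gives_negCycle
    {X : Type*} [Fintype X] [PartialOrder X] [DecidableEq X] (k : ℕ) (hk : 0 < k)
    (ε : ℝ) (hε0 : 0 < ε) (hε1 : ε < 1 / (2 * Fintype.card X))
    (a b x y : X) (hax : a < x) (hby : b < y)
    (hab : Incomp a b) (hay : Incomp a y) (hbx : Incomp b x) (hxy : Incomp x y) :
    (GPk X k ε).IsCycle [Sum.inl x, Sum.inr a, Sum.inl y, Sum.inr b] ∧
      (GPk X k ε).cycleWeight [Sum.inl x, Sum.inr a, Sum.inl y, Sum.inr b] = -(2 * ε) ∧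
      (GPk X k ε).HasNegCycle := by
  have hax' : a ≠ x := ne_of_lt hax
  have hby' : b ≠ y := ne_of_lt hby
  have hcyc : (GPk X k ε).IsCycle [Sum.inl x, Sum.inr a, Sum.inl y, Sum.inr b] := by
    refine cycle4 _ _ _ _ _ ?_ (Or.inl hax) (Or.inl hay) (Or.inl hby) (Or.inl hbx)
    simp [List.nodup_cons, hxy.1, hab.1]
  have hw : (GPk X k ε).cycleWeight [Sum.inl x, Sum.inr a, Sum.inl y, Sum.inr b] = -(2 * ε) := by
    rw [weight4]
    show (if a = x then (k:ℝ) else -ε) + (if a = y then (-1:ℝ) else 0) +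
      (if b = y then (k:ℝ) else -ε) + (if b = x then (-1:ℝ) else 0) = -(2*ε)
    rw [if_neg hax', if_neg hay.1, if_neg hby', if_neg hbx.1]
    ring
  exact ⟨hcyc, hw, ⟨_, hcyc, by rw [hw]; linarith⟩⟩
end

section
/- Let P = (X, ≺) be a finite poset, k a positive integer, and ε a real number with 0 < ε < 1/(2|X|). If P contains elements a_1 ≺ a_2 ≺ ⋯ ≺ a_{k+2} and an element x incomparable to every a_i (i.e., an induced (k+2)+1), then r_x → ℓ_{a_{k+2}} → r_{a_{k+1}} → ℓ_{a_{k+1}} → r_{a_k} → ℓ_{a_k} → ⋯ → r_{a_2} → ℓ_{a_2} → r_{a_1} → ℓ_x → r_x is a cycle in the weighted digraph G_{P,k} of total weight −(k+1)ε; in particular G_{P,k} contains a negative cycle. -/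
/-- The cycle of `G_{P,k}` associated to an induced `(k+2)+1` consisting of the
chain `a 0 ≺ a 1 ≺ ⋯ ≺ a (k+1)` and the extra element `x`, namely
`r_x → ℓ_{a (k+1)} → r_{a k} → ℓ_{a k} → ⋯ → r_{a 1} → ℓ_{a 1} → r_{a 0} → ℓ_x → r_x`. -/
def chainPlus1Cycle {X : Type*} (k : ℕ) (a : ℕ → X) (x : X) : List (X ⊕ X) :=
  Sum.inr x :: Sum.inl (a (k + 1)) ::
    ((((List.range k).reverse.map fun j => [Sum.inr (a (j + 1)), Sum.inl (a (j + 1))]).flatten)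
      ++ [Sum.inr (a 0), Sum.inl x])

set_option linter.unusedSectionVars false


section Aux
variable {X : Type*} [PartialOrder X]

def cycFn (k : ℕ) (a : ℕ → X) (x : X) (i : ℕ) : X ⊕ X :=
  if i = 0 then .inr x
  else if i = 2*k+3 then .inl x
  else if i % 2 = 0 then .inr (a (k + 1 - i / 2)) else .inl (a (k + 1 - i / 2))

lemma ofFn_cast {α : Type*} {m n : ℕ} (h : m = n) (f : Fin n → α) :
    (List.ofFn fun i : Fin m => f (Fin.cast h i)) = List.ofFn f := by
  subst h; rfl

lemma cycFn_eval_even (k : ℕ) (a : ℕ → X) (x : X) {i : ℕ} (h0 : i ≠ 0)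
    (h3 : i ≠ 2*k+3) (he : i % 2 = 0) :
    cycFn k a x i = .inr (a (k + 1 - i / 2)) := by
  simp only [cycFn, if_neg h0, if_neg h3, if_pos he]

lemma cycFn_eval_odd (k : ℕ) (a : ℕ → X) (x : X) {i : ℕ} (h0 : i ≠ 0)
    (h3 : i ≠ 2*k+3) (he : i % 2 ≠ 0) :
    cycFn k a x i = .inl (a (k + 1 - i / 2)) := by
  simp only [cycFn, if_neg h0, if_neg h3, if_neg he]

lemma mid_eq (k : ℕ) (a : ℕ → X) (x : X) :
    (((List.range k).reverse.map fun j =>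
        [Sum.inr (a (j + 1)), Sum.inl (a (j + 1))]).flatten : List (X ⊕ X))
      = List.ofFn (fun i : Fin (2*k) => cycFn k a x (i + 2)) := by
  induction k with
  | zero => simp
  | succ k ih =>
    rw [List.range_succ, List.reverse_append]
    simp only [List.reverse_singleton, List.singleton_append, List.map_cons,
      List.flatten_cons, ih]
    rw [← ofFn_cast (show 2+2*k = 2*(k+1) by ring)
      (fun i : Fin (2*(k+1)) => cycFn (k+1) a x (i + 2)), List.ofFn_add]
    simp only [List.ofFn_succ, List.ofFn_zero, Fin.coe_cast, Fin.coe_castAdd,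
      Fin.coe_natAdd, Fin.val_succ, Fin.val_zero, Fin.val_castLE]
    congr 1
    refine congrArg List.ofFn (funext fun i => ?_)
    have hlt : (i : ℕ) < 2*k := i.isLt
    rcases Nat.mod_two_eq_zero_or_one (i : ℕ) with he | ho
    · rw [cycFn_eval_even (k+1) a x (i := (2+(i:ℕ)+2)) (by omega)
        (by omega) (by omega),
        cycFn_eval_even k a x (i := ((i:ℕ)+2)) (by omega) (by omega) (by omega)]
      congr 2
      omega
    · rw [cycFn_eval_odd (k+1) a x (i := (2+(i:ℕ)+2)) (by omega)
        (by omega) (by omega),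
        cycFn_eval_odd k a x (i := ((i:ℕ)+2)) (by omega) (by omega) (by omega)]
      congr 2
      omega

end Aux

section Aux2
variable {X : Type*} [PartialOrder X]

lemma cycle_eq (k : ℕ) (a : ℕ → X) (x : X) :
    chainPlus1Cycle k a x = List.ofFn (fun i : Fin (2*k+4) => cycFn k a x i) := by
  rw [← ofFn_cast (show 1+(1+(2*k+2)) = 2*k+4 by ring) (fun i : Fin (2*k+4) => cycFn k a x i),
    List.ofFn_add, List.ofFn_add, List.ofFn_add]
  simp only [List.ofFn_succ, List.ofFn_zero, Fin.coe_cast, Fin.coe_castAdd,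
    Fin.coe_natAdd, Fin.val_succ, Fin.val_zero, Fin.val_castLE]
  rw [chainPlus1Cycle, mid_eq k a x]
  have e0 : cycFn k a x 0 = Sum.inr x := rfl
  have e1 : cycFn k a x 1 = Sum.inl (a (k+1)) := rfl
  have e2 : cycFn k a x (1+(1+(2*k+(0:ℕ)))) = Sum.inr (a 0) := by
    rw [cycFn_eval_even k a x (by omega) (by omega) (by omega)]
    congr 2
    omega
  have e3 : cycFn k a x (1+(1+(2*k+(0+1:ℕ)))) = Sum.inl x := by
    have : 1+(1+(2*k+(0+1:ℕ))) = 2*k+3 := by omega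
    rw [this, cycFn]
    simp
  rw [e0, e1, e2, e3]
  simp only [List.singleton_append, List.cons_append, List.nil_append]
  congr 3
  refine congrArg List.ofFn (funext fun i => ?_)
  congr 1
  omega

end Aux2

section Aux3
variable {X : Type*} [PartialOrder X] [DecidableEq X] {k : ℕ} {a : ℕ → X} {x : X} {ε : ℝ}

lemma a_inj (ha : ∀ i j, i < j → j < k + 2 → a i < a j) :
    ∀ m n, m < k + 2 → n < k + 2 → a m = a n → m = n := by
  intro m n hm hn hmn
  rcases lt_trichotomy m n with h | h | h
  · exact absurd hmn (ha m n h hn).ne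
  · exact h
  · exact absurd hmn.symm (ha n m h hm).ne

lemma cycFn_inj (ha : ∀ i j, i < j → j < k + 2 → a i < a j)
    (hx : ∀ i < k + 2, x ≠ a i) :
    ∀ i j, i < 2*k+4 → j < 2*k+4 → cycFn k a x i = cycFn k a x j → i = j := by
  have hainj := a_inj ha
  intro i j hi hj h
  simp only [cycFn] at h
  split_ifs at h
  all_goals first
    | omega
    | exact Sum.noConfusion h
    | (injection h with h'
       first
        | exact absurd h' (hx _ (by omega))
        | exact absurd h'.symm (hx _ (by omega))
        | (have := hainj _ _ (by omega) (by omega) h'; omega))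

end Aux3

section Aux4
variable {X : Type*} [PartialOrder X] [DecidableEq X] {k : ℕ} {a : ℕ → X} {x : X} {ε : ℝ}

lemma cyc_adj (ha : ∀ i j, i < j → j < k + 2 → a i < a j)
    (hx : ∀ i < k + 2, Incomp x (a i)) :
    ∀ i < 2*k+4, (GPk X k ε).Adj (cycFn k a x i) (cycFn k a x ((i+1) % (2*k+4))) := by
  intro i hi
  by_cases h3 : i = 2*k+3
  · subst h3
    have hm : (2*k+3+1) % (2*k+4) = 0 := by
      rw [show 2*k+3+1 = 2*k+4 from rfl, Nat.mod_self]
    rw [hm, show cycFn k a x (2*k+3) = Sum.inl x from by rw [cycFn]; simp,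
      show cycFn k a x 0 = Sum.inr x from rfl]
    exact Or.inr rfl
  · have hm : (i+1) % (2*k+4) = i+1 := Nat.mod_eq_of_lt (by omega)
    rw [hm]
    by_cases h0 : i = 0
    · subst h0
      rw [show cycFn k a x 0 = Sum.inr x from rfl,
        show cycFn k a x 1 = Sum.inl (a (k+1)) from rfl]
      exact Or.inl (hx (k+1) (by omega))
    · by_cases h2 : i = 2*k+2
      · subst h2
        rw [show (2*k+2)+1 = 2*k+3 from rfl,
          show cycFn k a x (2*k+3) = Sum.inl x from by rw [cycFn]; simp,
          cycFn_eval_even k a x (by omega) (by omega) (by omega),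
          show k+1-(2*k+2)/2 = 0 from by omega]
        obtain ⟨hne, hlt1, hlt2⟩ := hx 0 (by omega)
        exact Or.inl ⟨hne.symm, hlt2, hlt1⟩
      · by_cases hp : i % 2 = 0
        · rw [cycFn_eval_even k a x h0 h3 hp,
            cycFn_eval_odd k a x (by omega) (by omega) (by omega)]
          exact Or.inr (by congr 1; omega)
        · rw [cycFn_eval_odd k a x h0 h3 hp,
            cycFn_eval_even k a x (by omega) (by omega) (by omega)]
          exact Or.inl (ha _ _ (by omega) (by omega))

end Aux4

section Aux5
variable {X : Type*} [PartialOrder X] [DecidableEq X] {k : ℕ} {a : ℕ → X} {x : X} {ε : ℝ}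

lemma sum_mid (k : ℕ) (ε : ℝ) :
    ∑ t ∈ Finset.range (2*k+1), (if t % 2 = 0 then -ε else (-1:ℝ))
      = -((k+1:ℝ)*ε) - k := by
  induction k with
  | zero => norm_num
  | succ k ih =>
    rw [show 2*(k+1)+1 = (2*k+1)+1+1 by ring, Finset.sum_range_succ,
      Finset.sum_range_succ, ih, if_neg (by omega), if_pos (by omega)]
    push_cast; ring

lemma cyc_weight (ha : ∀ i j, i < j → j < k + 2 → a i < a j)
    (hxne : ∀ i < k + 2, x ≠ a i) :
    ∑ j ∈ Finset.range (2*k+4),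
        (GPk X k ε).w (cycFn k a x j) (cycFn k a x ((j+1) % (2*k+4)))
      = -((k+1:ℝ)*ε) := by
  have hW0 : (GPk X k ε).w (cycFn k a x 0) (cycFn k a x ((0+1) % (2*k+4))) = 0 := by
    rw [show (0+1) % (2*k+4) = 1 from Nat.mod_eq_of_lt (by omega),
      show cycFn k a x 0 = Sum.inr x from rfl,
      show cycFn k a x 1 = Sum.inl (a (k+1)) from rfl]
    simp only [GPk]
    rw [if_neg (hxne (k+1) (by omega))]
  have hW2 : (GPk X k ε).w (cycFn k a x (2*k+2)) (cycFn k a x ((2*k+2+1) % (2*k+4))) = 0 := by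
    rw [show (2*k+2+1) % (2*k+4) = 2*k+3 from Nat.mod_eq_of_lt (by omega),
      show cycFn k a x (2*k+3) = Sum.inl x from by rw [cycFn]; simp,
      cycFn_eval_even k a x (by omega) (by omega) (by omega),
      show k+1-(2*k+2)/2 = 0 from by omega]
    simp only [GPk]
    rw [if_neg (fun h => hxne 0 (by omega) h.symm)]
  have hW3 : (GPk X k ε).w (cycFn k a x (2*k+3)) (cycFn k a x ((2*k+3+1) % (2*k+4))) = k := by
    rw [show (2*k+3+1) % (2*k+4) = 0 from by
        rw [show 2*k+3+1 = 2*k+4 from rfl, Nat.mod_self],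
      show cycFn k a x (2*k+3) = Sum.inl x from by rw [cycFn]; simp,
      show cycFn k a x 0 = Sum.inr x from rfl]
    simp [GPk]
  have hWmid : ∀ t < 2*k+1,
      (GPk X k ε).w (cycFn k a x (t+1)) (cycFn k a x ((t+1+1) % (2*k+4)))
        = if t % 2 = 0 then -ε else -1 := by
    intro t ht
    rw [show (t+1+1) % (2*k+4) = t+2 from Nat.mod_eq_of_lt (by omega)]
    rcases Nat.mod_two_eq_zero_or_one t with hp | hp
    · rw [if_pos hp, cycFn_eval_odd k a x (by omega) (by omega) (by omega),
        cycFn_eval_even k a x (by omega) (by omega) (by omega)]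
      simp only [GPk]
      rw [if_neg (ha _ _ (by omega) (by omega)).ne]
    · rw [if_neg (by omega), cycFn_eval_even k a x (by omega) (by omega) (by omega),
        cycFn_eval_odd k a x (by omega) (by omega) (by omega)]
      simp only [GPk]
      rw [if_pos (congrArg a (by omega : k+1-(t+1)/2 = k+1-(t+2)/2))]
  set W : ℕ → ℝ := fun j =>
    (GPk X k ε).w (cycFn k a x j) (cycFn k a x ((j+1) % (2*k+4))) with hWdef
  rw [show (2*k+4) = (2*k+2)+1+1 from rfl, Finset.sum_range_succ, Finset.sum_range_succ,
    show (2*k+2) = (2*k+1)+1 from rfl, Finset.sum_range_succ']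
  rw [show 2*k+1+1 = 2*k+2 from rfl]
  rw [Finset.sum_congr rfl (fun t ht => hWmid t (Finset.mem_range.mp ht)), sum_mid,
    hW0, hW2, hW3]
  ring

end Aux5

/-- An induced `(k+2)+1`, i.e. a chain `a 0 ≺ a 1 ≺ ⋯ ≺ a (k+1)` together with
an element `x` incomparable to every element of the chain, yields the cycle
`r_x → ℓ_{a (k+1)} → r_{a k} → ℓ_{a k} → ⋯ → r_{a 1} → ℓ_{a 1} → r_{a 0} → ℓ_x → r_x`
in `G_{P,k}`, of total weight `-(k+1)ε`; in particular `G_{P,k}` has a negative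
cycle. -/
theorem inducedChainPlus1_gives_negCycle
    {X : Type*} [Fintype X] [PartialOrder X] [DecidableEq X] (k : ℕ) (hk : 0 < k)
    (ε : ℝ) (hε0 : 0 < ε) (hε1 : ε < 1 / (2 * Fintype.card X))
    (a : ℕ → X) (x : X)
    (hchain : ∀ i j, i < j → j < k + 2 → a i < a j)
    (hx : ∀ i < k + 2, Incomp x (a i)) :
    (GPk X k ε).IsCycle (chainPlus1Cycle k a x) ∧
      (GPk X k ε).cycleWeight (chainPlus1Cycle k a x) = -((k + 1 : ℝ) * ε) ∧
      (GPk X k ε).HasNegCycle := by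
  have hxne : ∀ i < k + 2, x ≠ a i := fun i hi => (hx i hi).1
  have hcyc : (GPk X k ε).IsCycle (chainPlus1Cycle k a x) := by
    rw [cycle_eq, WeightedDigraph.IsCycle]
    refine ⟨by simp, ?_, ?_⟩
    · rw [List.nodup_ofFn]
      intro i j hij
      exact Fin.ext (cycFn_inj hchain hxne i j i.isLt j.isLt hij)
    · intro i
      rw [List.get_ofFn, List.get_ofFn]
      simp only [Fin.coe_cast]
      have hi : (i : ℕ) < 2*k+4 := by
        have := i.isLt; simp at this; omega
      have hfn : ((finNext i : Fin _) : ℕ) = ((i : ℕ) + 1) % (2*k+4) := by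
        simp [finNext]
      rw [hfn]
      exact cyc_adj hchain hx _ hi
  have hwt : (GPk X k ε).cycleWeight (chainPlus1Cycle k a x) = -((k + 1 : ℝ) * ε) := by
    rw [cycle_eq, WeightedDigraph.cycleWeight]
    have hstep : ∀ i : Fin (List.ofFn fun i : Fin (2*k+4) => cycFn k a x (i : ℕ)).length,
        (GPk X k ε).w ((List.ofFn fun i : Fin (2*k+4) => cycFn k a x (i : ℕ)).get i)
            ((List.ofFn fun i : Fin (2*k+4) => cycFn k a x (i : ℕ)).get (finNext i))
          = (fun j : ℕ => (GPk X k ε).w (cycFn k a x j)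
              (cycFn k a x ((j+1) % (2*k+4)))) (i : ℕ) := by
      intro i
      rw [List.get_ofFn, List.get_ofFn]
      simp only [Fin.coe_cast]
      have hfn : ((finNext i : Fin _) : ℕ) = ((i : ℕ) + 1) % (2*k+4) := by
        simp [finNext]
      rw [hfn]
    rw [Finset.sum_congr rfl (fun i _ => hstep i),
      Fin.sum_univ_eq_sum_range
        (fun j : ℕ => (GPk X k ε).w (cycFn k a x j) (cycFn k a x ((j+1) % (2*k+4)))) _,
      List.length_ofFn]
    exact cyc_weight hchain hxne
  refine ⟨hcyc, hwt, ⟨chainPlus1Cycle k a x, hcyc, ?_⟩⟩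
  rw [hwt]
  have hpos : (0:ℝ) < ((k:ℝ) + 1) * ε := by positivity
  linarith
end

section
/- Let P = (X, ≺) be a finite poset, k a positive integer, and ε a real number with 0 < ε < 1/(2|X|). If C is a negative cycle in the weighted digraph G_{P,k} having the minimum number of arcs among all negative cycles, then the number of arcs of C of weight −1 is at least k times the number of arcs of C of weight k. -/
/-- In a negative cycle of `G_{P,k}` with the minimum number of arcs, there are
at least `k` arcs of weight `-1` for every arc of weight `k`. -/
theorem minimal_negCycle_count_weightK
    {X : Type*} [Fintype X] [PartialOrder X] [DecidableEq X] (k : ℕ) (hk : 0 < k)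
    (ε : ℝ) (hε0 : 0 < ε) (hε1 : ε < 1 / (2 * Fintype.card X))
    (c : List (X ⊕ X)) (hc : (GPk X k ε).IsCycle c)
    (hneg : (GPk X k ε).cycleWeight c < 0)
    (hmin : ∀ c' : List (X ⊕ X), (GPk X k ε).IsCycle c' →
      (GPk X k ε).cycleWeight c' < 0 → c.length ≤ c'.length) :
    k * Nat.card {i : Fin c.length // (GPk X k ε).w (c.get i) (c.get (finNext i)) = (k : ℝ)} ≤
      Nat.card {i : Fin c.length // (GPk X k ε).w (c.get i) (c.get (finNext i)) = -1} := by
  classical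
  obtain ⟨hne, hnodup, hadj⟩ := hc
  rw [WeightedDigraph.cycleWeight] at hneg
  set f : Fin c.length → ℝ := fun i => (GPk X k ε).w (c.get i) (c.get (finNext i)) with hf
  set A : Finset (Fin c.length) := Finset.univ.filter (fun i => f i = (k : ℝ)) with hAdef
  set B : Finset (Fin c.length) := Finset.univ.filter (fun i => f i = -1) with hBdef
  have hk0 : (0 : ℝ) < k := by exact_mod_cast hk
  have hcardA : Nat.card {i : Fin c.length // f i = (k : ℝ)} = A.card := by
    simp [Nat.card_eq_fintype_card, Fintype.card_subtype, hAdef]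
  have hcardB : Nat.card {i : Fin c.length // f i = -1} = B.card := by
    simp [Nat.card_eq_fintype_card, Fintype.card_subtype, hBdef]
  rw [hcardA, hcardB]
  -- X is nonempty
  have hXne : 0 < Fintype.card X := by
    rcases List.exists_mem_of_ne_nil c hne with ⟨v, -⟩
    rcases v with x | x <;> exact Fintype.card_pos_iff.mpr ⟨x⟩
  -- length bound
  have hlen : c.length ≤ 2 * Fintype.card X := by
    have := List.Nodup.length_le_card hnodup
    simp [Fintype.card_sum] at this
    omega
  -- disjointness
  have hdisj : Disjoint A B := by
    rw [Finset.disjoint_left]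
    intro i hiA hiB
    rw [hAdef, Finset.mem_filter] at hiA
    rw [hBdef, Finset.mem_filter] at hiB
    have : (k : ℝ) = -1 := by rw [← hiA.2, hiB.2]
    linarith
  -- values on A, B, and the rest
  have hvalA : ∀ i ∈ A, f i = (k : ℝ) := fun i hi => (Finset.mem_filter.mp hi).2
  have hvalB : ∀ i ∈ B, f i = -1 := fun i hi => (Finset.mem_filter.mp hi).2
  have hvalC : ∀ i ∈ Finset.univ \ (A ∪ B), -ε ≤ f i := by
    intro i hi
    rw [Finset.mem_sdiff, Finset.mem_union] at hi
    have hiA : f i ≠ (k : ℝ) := fun h => hi.2 (Or.inl (Finset.mem_filter.mpr ⟨Finset.mem_univ _, h⟩))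
    have hiB : f i ≠ -1 := fun h => hi.2 (Or.inr (Finset.mem_filter.mpr ⟨Finset.mem_univ _, h⟩))
    have hadji := hadj i
    have hfi : f i = (GPk X k ε).w (c.get i) (c.get (finNext i)) := rfl
    rcases hu : c.get i with x | x <;> rcases hv : c.get (finNext i) with y | y <;>
      rw [hu, hv] at hadji hfi
    · exact absurd hadji (by simp [GPk])
    · by_cases hxy : y = x
      · simp [GPk, hxy] at hfi
        exact absurd hfi hiA
      · simp [GPk, hxy] at hfi
        rw [hfi]
    · by_cases hxy : x = y
      · simp [GPk, hxy] at hfi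
        exact absurd hfi hiB
      · simp [GPk, hxy] at hfi
        rw [hfi]; linarith
    · exact absurd hadji (by simp [GPk])
  -- sum decomposition
  have hsub : A ∪ B ⊆ Finset.univ := Finset.subset_univ _
  have hsplit : ∑ i, f i = (∑ i ∈ A ∪ B, f i) + ∑ i ∈ Finset.univ \ (A ∪ B), f i := by
    rw [add_comm, Finset.sum_sdiff hsub]
  have hsumAB : ∑ i ∈ A ∪ B, f i = (A.card : ℝ) * k - B.card := by
    rw [Finset.sum_union hdisj, Finset.sum_congr rfl hvalA, Finset.sum_congr rfl hvalB]
    simp [Finset.sum_const, nsmul_eq_mul]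
    ring
  have hrest : ((Finset.univ \ (A ∪ B)).card : ℝ) ≤ c.length := by
    exact_mod_cast le_trans (Finset.card_le_card (Finset.sdiff_subset)) (by simp)
  have hsumC : -(ε * c.length) ≤ ∑ i ∈ Finset.univ \ (A ∪ B), f i := by
    have h2 : ∑ _i ∈ Finset.univ \ (A ∪ B), (-ε) ≤ ∑ i ∈ Finset.univ \ (A ∪ B), f i :=
      Finset.sum_le_sum hvalC
    rw [Finset.sum_const, nsmul_eq_mul] at h2
    nlinarith
  have hεn : ε * c.length < 1 := by
    have h2 : (0 : ℝ) < 2 * Fintype.card X := by positivity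
    have h3 : ε * (2 * Fintype.card X) < 1 := by
      calc ε * (2 * Fintype.card X) < (1 / (2 * Fintype.card X)) * (2 * Fintype.card X) := by
            nlinarith
        _ = 1 := by field_simp
    have h4 : (c.length : ℝ) ≤ 2 * Fintype.card X := by exact_mod_cast hlen
    nlinarith
  have hkey : (k : ℝ) * A.card < B.card + 1 := by
    have := hsplit ▸ hneg
    rw [hsumAB] at this
    nlinarith
  have : (k * A.card : ℕ) < B.card + 1 := by
    exact_mod_cast (by push_cast; linarith : ((k * A.card : ℕ) : ℝ) < ((B.card + 1 : ℕ) : ℝ))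
  omega
end

section
/- Let P = (X, ≺) be a finite poset, k a positive integer, and ε a real number with 0 < ε < 1/(2|X|). If C is a negative cycle in the weighted digraph G_{P,k} having the minimum number of arcs among all negative cycles, then C contains at least two arcs of weight −ε, and the total weight of C is at most −2ε. -/
private lemma finNext_val' {n : ℕ} (i : Fin n) :
    (finNext i : ℕ) = if i.1 + 1 = n then 0 else i.1 + 1 := by
  have hi := i.2
  simp only [finNext]
  split
  · next h => rw [h, Nat.mod_self]
  · exact Nat.mod_eq_of_lt (by omega)

private lemma finNext_injective' {n : ℕ} : Function.Injective (@finNext n) := by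
  intro i j h
  have hi := i.2; have hj := j.2
  have h' : (finNext i : ℕ) = (finNext j : ℕ) := congrArg Fin.val h
  rw [finNext_val', finNext_val'] at h'
  apply Fin.ext
  split at h' <;> split at h' <;> omega

private lemma finNext_finNext_ne' {n : ℕ} (hn : 3 ≤ n) (i : Fin n) :
    finNext (finNext i) ≠ i := by
  intro h
  have h' := congrArg Fin.val h
  have hi := i.2
  simp only [finNext_val'] at h'
  split at h' <;> split at h' <;> omega

/-- A negative cycle of `G_{P,k}` with the minimum number of arcs contains at
least two arcs of weight `-ε`, and its total weight is at most `-2ε`. -/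
theorem minimal_negCycle_two_eps_arcs
    {X : Type*} [Fintype X] [PartialOrder X] [DecidableEq X] (k : ℕ) (hk : 0 < k)
    (ε : ℝ) (hε0 : 0 < ε) (hε1 : ε < 1 / (2 * Fintype.card X))
    (c : List (X ⊕ X)) (hc : (GPk X k ε).IsCycle c)
    (hneg : (GPk X k ε).cycleWeight c < 0)
    (hmin : ∀ c' : List (X ⊕ X), (GPk X k ε).IsCycle c' →
      (GPk X k ε).cycleWeight c' < 0 → c.length ≤ c'.length) :
    2 ≤ Nat.card {i : Fin c.length // (GPk X k ε).w (c.get i) (c.get (finNext i)) = -ε} ∧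
      (GPk X k ε).cycleWeight c ≤ -(2 * ε) := by
  classical
  clear hmin
  -- step 0 : length ≥ 3
  have hn3 : 3 ≤ c.length := by
    obtain ⟨hne, hnd, hadj⟩ := hc
    have h1 : c.length ≠ 1 := by
      intro h
      obtain ⟨a, rfl⟩ := List.length_eq_one_iff.mp h
      have := hadj ⟨0, by simp⟩
      rcases a with y | x <;> simp [GPk, finNext] at this
    have h2 : c.length ≠ 2 := by
      intro h
      obtain ⟨a, b, rfl⟩ := List.length_eq_two.mp h
      have h01 := hadj ⟨0, by simp⟩
      have h10 := hadj ⟨1, by simp⟩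
      have e0 : finNext (⟨0, by simp⟩ : Fin ([a,b].length)) = ⟨1, by simp⟩ := by
        apply Fin.ext; norm_num [finNext]
      have e1 : finNext (⟨1, by simp⟩ : Fin ([a,b].length)) = ⟨0, by simp⟩ := by
        apply Fin.ext; norm_num [finNext]
      rw [e0] at h01
      rw [e1] at h10
      simp only [List.get] at h01 h10
      have hw : (GPk X k ε).cycleWeight [a, b] = (GPk X k ε).w a b + (GPk X k ε).w b a := by
        simp [WeightedDigraph.cycleWeight, Fin.sum_univ_two, e0, e1]
        rfl
      have hk1 : (1:ℝ) ≤ k := by exact_mod_cast hk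
      rcases a with y | x <;> rcases b with z | z <;> simp only [GPk] at h01 h10
      · have hzy : z = y := by
          rcases h01 with h | h
          · rcases h10 with h' | h'
            · exact absurd h h'.2.1
            · exact h'
          · exact h
        subst hzy
        rw [hw] at hneg
        have w1 : (GPk X k ε).w (Sum.inl z) (Sum.inr z) = (k:ℝ) := by simp [GPk]
        have w2 : (GPk X k ε).w (Sum.inr z) (Sum.inl z) = (-1:ℝ) := by simp [GPk]
        rw [w1, w2] at hneg
        linarith
      · have hxz : x = z := by
          rcases h10 with h | h
          · rcases h01 with h' | h'
            · exact absurd h h'.2.1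
            · exact h'
          · exact h
        subst hxz
        rw [hw] at hneg
        have w1 : (GPk X k ε).w (Sum.inr x) (Sum.inl x) = (-1:ℝ) := by simp [GPk]
        have w2 : (GPk X k ε).w (Sum.inl x) (Sum.inr x) = (k:ℝ) := by simp [GPk]
        rw [w1, w2] at hneg
        linarith
    have := List.length_pos_iff.mpr hne
    omega
  obtain ⟨hne, hnd, hadj⟩ := hc
  have hinj : Function.Injective c.get := List.nodup_iff_injective_get.mp hnd
  -- numeric preliminaries
  have hXne : Nonempty X := by
    cases c with
    | nil => exact absurd rfl hne
    | cons a _ => exact ⟨Sum.elim id id a⟩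
  have hcard1 : (1 : ℝ) ≤ Fintype.card X := by exact_mod_cast Fintype.card_pos
  have hεhalf : ε * (Fintype.card X) < 1/2 := by
    have h0 : (0:ℝ) < 2 * Fintype.card X := by positivity
    have := (lt_div_iff₀ h0).mp hε1
    nlinarith
  have hεlt1 : ε < 1 := by nlinarith
  have hk1 : (1:ℝ) ≤ k := by exact_mod_cast hk
  -- weight function per arc
  set W : Fin c.length → ℝ :=
    fun i => (GPk X k ε).w (c.get i) (c.get (finNext i)) with hWdef
  have hcw : (GPk X k ε).cycleWeight c = ∑ i, W i := rfl
  -- structure of arcs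
  have shape : ∀ i : Fin c.length,
      (∃ x y : X, c.get i = .inl y ∧ c.get (finNext i) = .inr x ∧ (x < y ∨ x = y)) ∨
      (∃ x y : X, c.get i = .inr x ∧ c.get (finNext i) = .inl y ∧ (Incomp x y ∨ x = y)) := by
    intro i
    have h := hadj i
    rcases hu : c.get i with y | x <;> rcases hv : c.get (finNext i) with b | b <;>
      rw [hu, hv] at h <;> simp only [GPk] at h
    · exact Or.inl ⟨b, y, rfl, rfl, h⟩
    · exact Or.inr ⟨x, b, rfl, rfl, h⟩
  have wval1 : ∀ x y : X, (GPk X k ε).w (.inl y) (.inr x) = if x = y then (k:ℝ) else -ε :=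
    fun _ _ => rfl
  have wval2 : ∀ x y : X, (GPk X k ε).w (.inr x) (.inl y) = if x = y then (-1:ℝ) else 0 :=
    fun _ _ => rfl
  -- distinctness of the four possible weight values
  have dk_e : ¬((k:ℝ) = -ε) := by intro hh; linarith
  have dk_b : ¬((k:ℝ) = -1) := by intro hh; linarith
  have de_k : ¬((-ε:ℝ) = k) := by intro hh; linarith
  have de_b : ¬((-ε:ℝ) = -1) := by intro hh; linarith
  have db_k : ¬((-1:ℝ) = k) := by intro hh; linarith
  have db_e : ¬((-1:ℝ) = -ε) := by intro hh; linarith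
  have d0_k : ¬((0:ℝ) = k) := by intro hh; linarith
  have d0_e : ¬((0:ℝ) = -ε) := by intro hh; linarith
  have d0_b : ¬((0:ℝ) = -1) := by intro hh; linarith
  -- the four possible weights
  have hWcases : ∀ i, W i = k ∨ W i = -ε ∨ W i = -1 ∨ W i = 0 := by
    intro i
    rcases shape i with ⟨x, y, h1, h2, _⟩ | ⟨x, y, h1, h2, _⟩ <;>
      simp only [hWdef, h1, h2, wval1, wval2] <;> split <;> tauto
  -- weights determine shapes
  have shapeE : ∀ i, W i = -ε →
      ∃ x y : X, c.get i = .inl y ∧ c.get (finNext i) = .inr x ∧ x < y := by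
    intro i hi
    rcases shape i with ⟨x, y, h1, h2, h3⟩ | ⟨x, y, h1, h2, h3⟩
    · simp only [hWdef, h1, h2, wval1] at hi
      rcases h3 with h3 | h3
      · exact ⟨x, y, h1, h2, h3⟩
      · rw [if_pos h3] at hi; exfalso; linarith
    · simp only [hWdef, h1, h2, wval2] at hi
      split at hi <;> exfalso <;> linarith
  have shapeB : ∀ i, W i = -1 →
      ∃ x : X, c.get i = .inr x ∧ c.get (finNext i) = .inl x := by
    intro i hi
    rcases shape i with ⟨x, y, h1, h2, h3⟩ | ⟨x, y, h1, h2, h3⟩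
    · simp only [hWdef, h1, h2, wval1] at hi
      split at hi <;> exfalso <;> linarith
    · simp only [hWdef, h1, h2, wval2] at hi
      by_cases hxy : x = y
      · subst hxy; exact ⟨x, h1, h2⟩
      · rw [if_neg hxy] at hi; exfalso; linarith
  -- the arc after a (-1)-arc is a (-ε)-arc
  have hC : ∀ i, W i = -1 → W (finNext i) = -ε := by
    intro i hi
    obtain ⟨x, hgi, hgn⟩ := shapeB i hi
    rcases shape (finNext i) with ⟨z, y, h1, h2, h3⟩ | ⟨z, y, h1, h2, _⟩
    · rw [hgn] at h1
      have hyx : y = x := by exact Sum.inl.inj h1.symm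
      subst hyx
      rcases h3 with h3 | h3
      · simp only [hWdef, hgn, h2, wval1]
        rw [if_neg (ne_of_lt h3)]
      · exfalso
        apply finNext_finNext_ne' hn3 i
        apply hinj
        rw [h2, hgi, h3]
    · rw [hgn] at h1; exact absurd h1 (by simp)
  -- the arc before a (-1)-arc is a (-ε)-arc
  have hC' : ∀ j, W (finNext j) = -1 → W j = -ε := by
    intro j hj
    obtain ⟨x, hgn, hgnn⟩ := shapeB (finNext j) hj
    rcases shape j with ⟨z, y, h1, h2, h3⟩ | ⟨z, y, h1, h2, _⟩
    · rw [hgn] at h2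
      have hzx : z = x := by exact Sum.inr.inj h2.symm
      subst hzx
      rcases h3 with h3 | h3
      · simp only [hWdef, h1, hgn, wval1]
        rw [if_neg (ne_of_lt h3)]
      · exfalso
        apply finNext_finNext_ne' hn3 j
        apply hinj
        rw [hgnn, h1, h3]
    · rw [hgn] at h2; exact absurd h2 (by simp)
  -- the counting sets
  set SK := Finset.univ.filter (fun i => W i = (k:ℝ)) with hSK
  set SE := Finset.univ.filter (fun i => W i = -ε) with hSE
  set SB := Finset.univ.filter (fun i => W i = -1) with hSB
  have memSE : ∀ i, i ∈ SE ↔ W i = -ε := by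
    intro i; rw [hSE, Finset.mem_filter]; simp
  have memSB : ∀ i, i ∈ SB ↔ W i = -1 := by
    intro i; rw [hSB, Finset.mem_filter]; simp
  have memSK : ∀ i, i ∈ SK ↔ W i = (k:ℝ) := by
    intro i; rw [hSK, Finset.mem_filter]; simp
  -- total weight
  have hsum : (GPk X k ε).cycleWeight c
      = k * SK.card - ε * SE.card - SB.card := by
    rw [hcw]
    have hpt : ∀ i ∈ Finset.univ, W i =
        k * (if W i = (k:ℝ) then (1:ℝ) else 0) - ε * (if W i = -ε then 1 else 0)
          - (if W i = -1 then 1 else 0) := by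
      intro i _
      rcases hWcases i with h | h | h | h <;> rw [h]
      · rw [if_pos rfl, if_neg dk_e, if_neg dk_b]; ring
      · rw [if_neg de_k, if_pos rfl, if_neg de_b]; ring
      · rw [if_neg db_k, if_neg db_e, if_pos rfl]; ring
      · rw [if_neg d0_k, if_neg d0_e, if_neg d0_b]; ring
    rw [Finset.sum_congr rfl hpt, Finset.sum_sub_distrib, Finset.sum_sub_distrib,
      ← Finset.mul_sum, ← Finset.mul_sum, Finset.sum_boole, Finset.sum_boole,
      Finset.sum_boole, hSK, hSE, hSB]
  -- size bounds
  have hSE_le : SE.card ≤ Fintype.card X := by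
    rw [← Finset.card_univ]
    apply Finset.card_le_card_of_injOn (fun i => Sum.elim id id (c.get i))
    · intro i _; exact Finset.mem_univ _
    · intro i hi j hj hij
      obtain ⟨xi, yi, h1i, _, _⟩ := shapeE i ((memSE i).mp hi)
      obtain ⟨xj, yj, h1j, _, _⟩ := shapeE j ((memSE j).mp hj)
      apply hinj
      rw [h1i, h1j]
      simp only [h1i, h1j, Sum.elim_inl, id] at hij
      rw [hij]
  have hSB_le : SB.card ≤ SE.card := by
    apply Finset.card_le_card_of_injOn finNext
    · intro i hi
      exact (memSE _).mpr (hC i ((memSB i).mp hi))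
    · exact fun i _ j _ h => finNext_injective' h
  -- the integrality trick
  have hbase : k * SK.card ≤ SB.card := by
    by_contra hlt
    push_neg at hlt
    have hge : (SB.card : ℝ) + 1 ≤ (k : ℝ) * SK.card := by
      have : SB.card + 1 ≤ k * SK.card := hlt
      exact_mod_cast this
    rw [hsum] at hneg
    have hεA : ε * SE.card ≤ ε * Fintype.card X := by
      apply mul_le_mul_of_nonneg_left _ hε0.le
      exact_mod_cast hSE_le
    linarith
  -- at least one -ε arc
  have hE1 : 1 ≤ SE.card := by
    by_contra h
    push_neg at h
    have hcE : SE.card = 0 := by omega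
    have hB0 : SB.card = 0 := by omega
    rw [hsum, hcE, hB0] at hneg
    have hKnn : (0:ℝ) ≤ (k:ℝ) * SK.card := by positivity
    push_cast at hneg
    linarith
  -- not exactly one
  have hE2 : SE.card ≠ 1 := by
    intro h1
    obtain ⟨e, he⟩ := Finset.card_eq_one.mp h1
    have hBle : SB.card ≤ 1 := by omega
    rcases Nat.le_one_iff_eq_zero_or_eq_one.mp hBle with hB0 | hB1
    · -- no (-1)-arc : then no k-arc either, and the cycle is too short
      have hK0 : SK.card = 0 := by
        have hb' : k * SK.card = 0 := Nat.le_zero.mp (hB0 ▸ hbase)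
        rcases Nat.mul_eq_zero.mp hb' with h | h
        · omega
        · exact h
      set SL := Finset.univ.filter (fun i => ∃ y : X, c.get i = Sum.inl y) with hSL
      have memSL : ∀ i, i ∈ SL ↔ ∃ y : X, c.get i = Sum.inl y := by
        intro i; rw [hSL, Finset.mem_filter]; simp
      have hsub : SL ⊆ SK ∪ SE := by
        intro i hi
        obtain ⟨y, hy⟩ := (memSL i).mp hi
        rcases shape i with ⟨x, y', h1', h2', h3'⟩ | ⟨x, y', h1', h2', _⟩
        · rcases h3' with h3' | h3'
          · apply Finset.mem_union_right
            apply (memSE i).mpr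
            simp only [hWdef, h1', h2', wval1]
            rw [if_neg (ne_of_lt h3')]
          · apply Finset.mem_union_left
            apply (memSK i).mpr
            simp only [hWdef, h1', h2', wval1]
            rw [if_pos h3']
        · rw [hy] at h1'; exact absurd h1' (by simp)
      have hcompl : ∀ i ∈ SLᶜ, finNext i ∈ SL := by
        intro i hi
        rw [Finset.mem_compl] at hi
        rcases shape i with ⟨x, y', h1', h2', _⟩ | ⟨x, y', h1', h2', _⟩
        · exact absurd ((memSL i).mpr ⟨y', h1'⟩) hi
        · exact (memSL _).mpr ⟨y', h2'⟩
      have hcle : SLᶜ.card ≤ SL.card :=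
        Finset.card_le_card_of_injOn finNext hcompl (fun i _ j _ h => finNext_injective' h)
      have hcards : SL.card + SLᶜ.card = c.length := by
        rw [Finset.card_add_card_compl, Fintype.card_fin]
      have hSL1 : SL.card ≤ 1 := by
        calc SL.card ≤ (SK ∪ SE).card := Finset.card_le_card hsub
        _ ≤ SK.card + SE.card := Finset.card_union_le _ _
        _ ≤ 1 := by omega
      omega
    · obtain ⟨b0, hb⟩ := Finset.card_eq_one.mp hB1
      have hWb : W b0 = -1 := (memSB b0).mp (by rw [hb]; exact Finset.mem_singleton_self _)
      have h1e : finNext b0 = e := by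
        have := (memSE _).mpr (hC b0 hWb)
        rw [he, Finset.mem_singleton] at this
        exact this
      obtain ⟨j, hj⟩ := Finite.surjective_of_injective (finNext_injective' (n := c.length)) b0
      have hWj : W j = -ε := hC' j (by rw [hj]; exact hWb)
      have hje : j = e := by
        have := (memSE j).mpr hWj
        rw [he, Finset.mem_singleton] at this
        exact this
      have hj' : finNext e = b0 := by rw [← hje]; exact hj
      exact finNext_finNext_ne' hn3 e (by rw [hj', h1e])
  -- conclusion
  have hE : 2 ≤ SE.card := by omega
  constructor
  · obtain ⟨a, ha, b, hb, hab⟩ := Finset.one_lt_card.mp (by omega : 1 < SE.card)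
    have hpa : W a = -ε := (memSE a).mp ha
    have hpb : W b = -ε := (memSE b).mp hb
    have hnt : Nontrivial
        {i : Fin c.length // (GPk X k ε).w (c.get i) (c.get (finNext i)) = -ε} :=
      ⟨⟨a, hpa⟩, ⟨b, hpb⟩, by simp [Subtype.ext_iff, hab]⟩
    exact Finite.one_lt_card_iff_nontrivial.mpr hnt
  · rw [hsum]
    have h2ε : ε * 2 ≤ ε * SE.card := by
      apply mul_le_mul_of_nonneg_left _ hε0.le
      exact_mod_cast hE
    have hbR : (k:ℝ) * SK.card ≤ SB.card := by exact_mod_cast hbase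
    linarith
end

section
/- Let P = (X, ≺) be a finite poset, k a positive integer, and ε a real number with 0 < ε < 1/(2|X|). Suppose P contains no induced 2+2. If C is a negative cycle in the weighted digraph G_{P,k} having the minimum number of arcs among all negative cycles, then C does not contain three consecutive arcs whose weights are −ε, 0, −ε (in that order). -/
namespace MyAux

open List

lemma zipWith_sum_append_singleton {V : Type*} (w : V → V → ℝ) :
    ∀ (l t : List V) (x : V) (h : l ≠ []), t.length + 1 = l.length →
      (List.zipWith w l (t ++ [x])).sum
        = (List.zipWith w l t).sum + w (l.getLast h) x := by
  intro l
  induction l with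
  | nil => intro t x h; exact absurd rfl h
  | cons a l ih =>
    intro t x h hlen
    cases t with
    | nil =>
      have hl : l = [] := by simpa using hlen.symm
      subst hl; simp
    | cons b t' =>
      have hl : l ≠ [] := by
        intro hl; rw [hl] at hlen; simp at hlen
      simp only [List.cons_append, List.zipWith_cons_cons, List.sum_cons]
      rw [ih t' x hl (by simpa using hlen), List.getLast_cons hl]
      ring

lemma cycleWeight_eq_zipWith {V : Type*} (G : WeightedDigraph V) (c : List V) :
    G.cycleWeight c = (List.zipWith G.w c (c.rotate 1)).sum := by
  have h : List.zipWith G.w c (c.rotate 1)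
      = List.ofFn (fun i : Fin c.length => G.w (c.get i) (c.get (finNext i))) := by
    apply List.ext_get
    · simp
    · intro n h1 h2
      have hn : n < c.length := by simpa using h2
      have hz : n < (List.zipWith G.w c (c.rotate 1)).length := h1
      rw [List.get_ofFn]
      rw [List.get_eq_getElem, List.getElem_zipWith]
      congr 1
      · rw [List.getElem_rotate]
        rfl
  rw [h, List.sum_ofFn]
  rfl

end MyAux
namespace MyAux

lemma finNext_val {n : ℕ} (i : Fin n) : (finNext i).val = (i.val + 1) % n := rfl

lemma isCycle_rotate {V : Type*} (G : WeightedDigraph V) (c : List V) (n : ℕ)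
    (h : G.IsCycle c) : G.IsCycle (c.rotate n) := by
  obtain ⟨hne, hnd, harc⟩ := h
  have hL : 0 < c.length := List.length_pos_iff.mpr hne
  have hlen : (c.rotate n).length = c.length := List.length_rotate c n
  refine ⟨?_, List.nodup_rotate.mpr hnd, ?_⟩
  · simp [List.rotate_eq_nil_iff, hne]
  · rintro ⟨jv, hj⟩
    rw [List.get_rotate, List.get_rotate]
    show G.Adj (c.get ⟨(jv + n) % c.length, Nat.mod_lt _ hL⟩)
      (c.get ⟨((jv + 1) % (c.rotate n).length + n) % c.length, Nat.mod_lt _ hL⟩)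
    have h2 : (⟨((jv + 1) % (c.rotate n).length + n) % c.length, Nat.mod_lt _ hL⟩
          : Fin c.length)
        = finNext ⟨(jv + n) % c.length, Nat.mod_lt _ hL⟩ := by
      apply Fin.ext
      show ((jv + 1) % (c.rotate n).length + n) % c.length
        = ((jv + n) % c.length + 1) % c.length
      rw [hlen, Nat.mod_add_mod, Nat.mod_add_mod]
      congr 1
      omega
    rw [h2]
    exact harc _

lemma cycleWeight_rotate {V : Type*} (G : WeightedDigraph V) (c : List V) (n : ℕ) :
    G.cycleWeight (c.rotate n) = G.cycleWeight c := by
  rcases List.eq_nil_or_concat c with rfl | hc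
  · simp [List.rotate_nil]
  have hL : 0 < c.length := by
    obtain ⟨l, a, rfl⟩ := hc
    simp
  haveI : NeZero c.length := ⟨hL.ne'⟩
  have hlen : (c.rotate n).length = c.length := List.length_rotate c n
  let m : Fin c.length := ⟨n % c.length, Nat.mod_lt _ hL⟩
  refine Fintype.sum_equiv ((finCongr hlen).trans (Equiv.addRight m))
    (fun j : Fin (c.rotate n).length =>
      G.w ((c.rotate n).get j) ((c.rotate n).get (finNext j)))
    (fun i : Fin c.length => G.w (c.get i) (c.get (finNext i))) ?_
  rintro ⟨jv, hj⟩
  rw [List.get_rotate, List.get_rotate]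
  have e1 : (((finCongr hlen).trans (Equiv.addRight m)) ⟨jv, hj⟩ : Fin c.length)
      = ⟨(jv + n) % c.length, Nat.mod_lt _ hL⟩ := by
    apply Fin.ext
    show (jv + n % c.length) % c.length = (jv + n) % c.length
    exact Nat.add_mod_mod jv n c.length
  rw [e1]
  have h2 : (⟨((jv + 1) % (c.rotate n).length + n) % c.length, Nat.mod_lt _ hL⟩
        : Fin c.length)
      = finNext ⟨(jv + n) % c.length, Nat.mod_lt _ hL⟩ := by
    apply Fin.ext
    show ((jv + 1) % (c.rotate n).length + n) % c.length
      = ((jv + n) % c.length + 1) % c.length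
    rw [hlen, Nat.mod_add_mod, Nat.mod_add_mod]
    congr 1
    omega
  show G.w (c.get ⟨(jv + n) % c.length, Nat.mod_lt _ hL⟩)
      (c.get ⟨((jv + 1) % (c.rotate n).length + n) % c.length, Nat.mod_lt _ hL⟩) = _
  rw [h2]

end MyAux
namespace MyAux

lemma shorten_isCycle {V : Type*} (G : WeightedDigraph V) (a0 a1 h : V) (t : List V)
    (hcyc : G.IsCycle (a0 :: a1 :: h :: t))
    (hadj : G.Adj ((h :: t).getLast (List.cons_ne_nil _ _)) h) :
    G.IsCycle (h :: t) := by
  obtain ⟨-, hnd, harc⟩ := hcyc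
  refine ⟨List.cons_ne_nil _ _, ?_, ?_⟩
  · exact hnd.sublist (by simp [List.sublist_cons_of_sublist])
  · rintro ⟨jv, hj⟩
    have hj' : jv < t.length + 1 := by simpa using hj
    rcases Nat.lt_or_ge jv t.length with hlt | hge
    · have harc' := harc ⟨jv + 2, by simp; omega⟩
      have e1 : (a0 :: a1 :: h :: t).get ⟨jv + 2, by simp; omega⟩
          = (h :: t).get ⟨jv, hj⟩ := rfl
      have e2 : (finNext (⟨jv + 2, by simp; omega⟩ : Fin (a0 :: a1 :: h :: t).length))
          = ⟨jv + 3, by simp; omega⟩ := by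
        apply Fin.ext
        show (jv + 2 + 1) % (a0 :: a1 :: h :: t).length = jv + 3
        apply Nat.mod_eq_of_lt
        simp; omega
      have e3 : (finNext (⟨jv, hj⟩ : Fin (h :: t).length)) = ⟨jv + 1, by simp; omega⟩ := by
        apply Fin.ext
        show (jv + 1) % (h :: t).length = jv + 1
        apply Nat.mod_eq_of_lt
        simp; omega
      have e4 : (a0 :: a1 :: h :: t).get ⟨jv + 3, by simp; omega⟩
          = (h :: t).get ⟨jv + 1, by simp; omega⟩ := rfl
      rw [e2] at harc'
      rw [e3]
      rw [e1, e4] at harc'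
      exact harc'
    · have hjt : jv = t.length := by omega
      subst hjt
      have e3 : (finNext (⟨t.length, hj⟩ : Fin (h :: t).length)) = ⟨0, by simp⟩ := by
        apply Fin.ext
        show (t.length + 1) % (h :: t).length = 0
        simp
      rw [e3]
      have e5 : (h :: t).get ⟨t.length, hj⟩ = (h :: t).getLast (List.cons_ne_nil _ _) := by
        rw [List.getLast_eq_getElem, List.get_eq_getElem]
        congr 1
      have e6 : (h :: t).get ⟨0, by simp⟩ = h := rfl
      rw [e5, e6]
      exact hadj

lemma shorten_cycleWeight {V : Type*} (G : WeightedDigraph V) (a0 a1 h : V) (t : List V) :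
    G.cycleWeight (h :: t) =
      G.cycleWeight (a0 :: a1 :: h :: t)
        - G.w a0 a1 - G.w a1 h
        - G.w ((h :: t).getLast (List.cons_ne_nil _ _)) a0
        + G.w ((h :: t).getLast (List.cons_ne_nil _ _)) h := by
  rw [cycleWeight_eq_zipWith, cycleWeight_eq_zipWith]
  have r1 : (h :: t).rotate 1 = t ++ [h] := by
    rw [List.rotate_cons_succ, List.rotate_zero]
  have r2 : (a0 :: a1 :: h :: t).rotate 1 = (a1 :: h :: t) ++ [a0] := by
    rw [List.rotate_cons_succ, List.rotate_zero]
  rw [r1, r2]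
  simp only [List.cons_append, List.zipWith_cons_cons, List.sum_cons]
  rw [zipWith_sum_append_singleton G.w (h :: t) t a0 (List.cons_ne_nil _ _) (by simp),
    zipWith_sum_append_singleton G.w (h :: t) t h (List.cons_ne_nil _ _) (by simp)]
  ring

end MyAux
namespace MyAux

lemma eps_arc {X : Type*} [PartialOrder X] [DecidableEq X] {k : ℕ} {ε : ℝ}
    (hk : 0 < k) (hε0 : 0 < ε) (hε1 : ε < 1) {u v : X ⊕ X}
    (hadj : (GPk X k ε).Adj u v) (hw : (GPk X k ε).w u v = -ε) :
    ∃ y x : X, u = Sum.inl y ∧ v = Sum.inr x ∧ x < y := by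
  cases u with
  | inl y =>
    cases v with
    | inl y' => exact absurd hadj (by simp [GPk])
    | inr x =>
      refine ⟨y, x, rfl, rfl, ?_⟩
      simp only [GPk] at hadj hw
      by_cases hxy : x = y
      · rw [if_pos hxy] at hw
        have h1 : (1:ℝ) ≤ (k:ℝ) := by exact_mod_cast hk
        linarith
      · exact hadj.resolve_right hxy
  | inr x =>
    cases v with
    | inl y =>
      simp only [GPk] at hw
      by_cases hxy : x = y
      · rw [if_pos hxy] at hw; linarith
      · rw [if_neg hxy] at hw; linarith
    | inr x' => exact absurd hadj (by simp [GPk])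

lemma zero_arc {X : Type*} [PartialOrder X] [DecidableEq X] {k : ℕ} {ε : ℝ}
    (hk : 0 < k) (hε0 : 0 < ε) {u v : X ⊕ X}
    (hadj : (GPk X k ε).Adj u v) (hw : (GPk X k ε).w u v = 0) :
    ∃ x y : X, u = Sum.inr x ∧ v = Sum.inl y ∧ Incomp x y := by
  cases u with
  | inl y =>
    cases v with
    | inl y' => exact absurd hadj (by simp [GPk])
    | inr x =>
      simp only [GPk] at hw
      by_cases hxy : x = y
      · rw [if_pos hxy] at hw
        have h1 : (1:ℝ) ≤ (k:ℝ) := by exact_mod_cast hk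
        linarith
      · rw [if_neg hxy] at hw; linarith
  | inr x =>
    cases v with
    | inl y =>
      refine ⟨x, y, rfl, rfl, ?_⟩
      simp only [GPk] at hadj hw
      by_cases hxy : x = y
      · rw [if_pos hxy] at hw; linarith
      · exact hadj.resolve_right hxy
    | inr x' => exact absurd hadj (by simp [GPk])

lemma order_bd {X : Type*} [PartialOrder X] (h22 : ¬ HasInduced22 X)
    {a b c d : X} (had : a < d) (hbc : b < c) (hac : Incomp a c) : b < d := by
  by_contra hbd
  apply h22
  refine ⟨a, b, d, c, had, hbc, ?_, hac, ?_, ?_⟩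
  · refine ⟨?_, ?_, ?_⟩
    · rintro rfl; exact hac.2.1 hbc
    · intro hab; exact hac.2.1 (hab.trans hbc)
    · intro hba; exact hbd (hba.trans had)
  · refine ⟨?_, ?_, ?_⟩
    · rintro rfl; exact hac.2.1 (had.trans hbc)
    · exact hbd
    · intro hdb; exact hac.2.1 (had.trans (hdb.trans hbc))
  · refine ⟨?_, ?_, ?_⟩
    · rintro rfl; exact hac.2.1 had
    · intro hdc; exact hac.2.1 (had.trans hdc)
    · intro hcd; exact hbd (hbc.trans hcd)

lemma finNext2_val {L : ℕ} (j : Fin L) :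
    (finNext (finNext j)).val = (j.val + 2) % L := by
  show ((j.val + 1) % L + 1) % L = (j.val + 2) % L
  rw [Nat.mod_add_mod]

lemma finNext3_val {L : ℕ} (j : Fin L) :
    (finNext (finNext (finNext j))).val = (j.val + 3) % L := by
  show ((finNext (finNext j)).val + 1) % L = (j.val + 3) % L
  rw [finNext2_val, Nat.mod_add_mod]

end MyAux
namespace MyAux

lemma w_vals {X : Type*} [PartialOrder X] [DecidableEq X] (k : ℕ) (ε : ℝ)
    (u v : X ⊕ X) :
    (GPk X k ε).w u v = -ε ∨ ∃ z : ℤ, (GPk X k ε).w u v = (z : ℝ) := by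
  cases u with
  | inl y =>
    cases v with
    | inl y' => exact Or.inr ⟨0, by simp [GPk]⟩
    | inr x =>
      simp only [GPk]
      by_cases hxy : x = y
      · exact Or.inr ⟨k, by rw [if_pos hxy]; simp⟩
      · exact Or.inl (by rw [if_neg hxy])
  | inr x =>
    cases v with
    | inl y =>
      simp only [GPk]
      by_cases hxy : x = y
      · exact Or.inr ⟨-1, by rw [if_pos hxy]; simp⟩
      · exact Or.inr ⟨0, by rw [if_neg hxy]; simp⟩
    | inr x' => exact Or.inr ⟨0, by simp [GPk]⟩

lemma getLast_eq_get' {V : Type*} (l : List V) (h : l ≠ []) (j : Fin l.length)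
    (hj : j.val = l.length - 1) : l.getLast h = l.get j := by
  rw [List.getLast_eq_getElem, List.get_eq_getElem]
  congr 1
  exact hj.symm

end MyAux
open MyAux

/-- If `P` has no induced `2+2`, then a negative cycle of `G_{P,k}` with the
minimum number of arcs contains no three consecutive arcs of weights
`-ε, 0, -ε` (in that order). -/
theorem minimal_negCycle_no_eps_zero_eps
    {X : Type*} [Fintype X] [PartialOrder X] [DecidableEq X] (k : ℕ) (hk : 0 < k)
    (ε : ℝ) (hε0 : 0 < ε) (hε1 : ε < 1 / (2 * Fintype.card X))
    (h22 : ¬ HasInduced22 X)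
    (c : List (X ⊕ X)) (hc : (GPk X k ε).IsCycle c)
    (hneg : (GPk X k ε).cycleWeight c < 0)
    (hmin : ∀ c' : List (X ⊕ X), (GPk X k ε).IsCycle c' →
      (GPk X k ε).cycleWeight c' < 0 → c.length ≤ c'.length) :
    ¬ ∃ i : Fin c.length,
        (GPk X k ε).w (c.get i) (c.get (finNext i)) = -ε ∧
        (GPk X k ε).w (c.get (finNext i)) (c.get (finNext (finNext i))) = 0 ∧
        (GPk X k ε).w (c.get (finNext (finNext i)))
          (c.get (finNext (finNext (finNext i)))) = -ε := by
  rintro ⟨i, h1, h2, h3⟩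
  obtain ⟨hne, hnd, harc⟩ := hc
  have hL : 0 < c.length := i.pos
  -- X is nonempty
  have hXne : Nonempty X := by
    rcases c.get ⟨0, hL⟩ with x | x
    exacts [⟨x⟩, ⟨x⟩]
  have hcard : 0 < Fintype.card X := Fintype.card_pos
  have hcardR : (0:ℝ) < 2 * (Fintype.card X : ℝ) := by positivity
  have hεcard : ε * (2 * (Fintype.card X : ℝ)) < 1 := by
    rw [mul_comm]
    have := (lt_div_iff₀ hcardR).mp (by exact_mod_cast hε1)
    linarith [this]
  have hε1' : ε < 1 := by
    have h1le : (1:ℝ) ≤ (Fintype.card X : ℝ) := by exact_mod_cast hcard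
    have h2le : (2:ℝ) ≤ 2 * (Fintype.card X : ℝ) := by linarith
    have := mul_le_mul_of_nonneg_left h2le hε0.le
    linarith
  -- identify the four vertices
  obtain ⟨d, a, hu0, hu1, had⟩ := eps_arc hk hε0 hε1' (harc i) h1
  obtain ⟨a', c0, hu1', hu2, hac'⟩ := zero_arc hk hε0 (harc (finNext i)) h2
  have haa : a' = a := by
    rw [hu1] at hu1'; exact (Sum.inr.inj hu1').symm
  have hac : Incomp a c0 := haa ▸ hac'
  obtain ⟨c0', b, hu2', hu3, hbc'⟩ :=
    eps_arc hk hε0 hε1' (harc (finNext (finNext i))) h3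
  have hcc : c0 = c0' := by
    rw [hu2] at hu2'; exact Sum.inl.inj hu2'
  have hbc : b < c0 := hcc ▸ hbc'
  have hbd : b < d := order_bd h22 had hbc hac
  obtain ⟨iv, hilt⟩ := i
  -- the cycle has at least 4 vertices
  have hL4 : 4 ≤ c.length := by
    by_contra hcon
    push_neg at hcon
    rcases (by omega : c.length = 1 ∨ c.length = 2 ∨ c.length = 3) with hLe | hLe | hLe
    · have e : finNext (⟨iv, hilt⟩ : Fin c.length) = ⟨iv, hilt⟩ := by
        apply Fin.ext
        show (iv + 1) % c.length = iv
        rw [hLe]; omega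
      rw [e, hu0] at hu1
      simp at hu1
    · have e : finNext (finNext (⟨iv, hilt⟩ : Fin c.length)) = ⟨iv, hilt⟩ := by
        apply Fin.ext
        rw [finNext2_val]
        show (iv + 2) % c.length = iv
        rw [hLe]; omega
      rw [e, hu0] at hu2
      have : d = c0 := Sum.inl.inj hu2
      subst this
      exact hac.2.1 had
    · have e : finNext (finNext (finNext (⟨iv, hilt⟩ : Fin c.length))) = ⟨iv, hilt⟩ := by
        apply Fin.ext
        rw [finNext3_val]
        show (iv + 3) % c.length = iv
        rw [hLe]; omega
      rw [e, hu0] at hu3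
      simp at hu3
  -- the two ε-arc indices are distinct
  have hj12 : (⟨iv, hilt⟩ : Fin c.length) ≠ finNext (finNext ⟨iv, hilt⟩) := by
    intro hcon
    have := congrArg Fin.val hcon
    rw [finNext2_val] at this
    simp only at this
    rcases Nat.lt_or_ge (iv + 2) c.length with hlt | hge
    · rw [Nat.mod_eq_of_lt hlt] at this; omega
    · have h2L : iv + 2 - c.length < c.length := by omega
      rw [Nat.mod_eq_sub_mod hge, Nat.mod_eq_of_lt h2L] at this
      omega
  classical
  -- cycle weight is at most -2ε
  have hW2 : (GPk X k ε).cycleWeight c ≤ -(2*ε) := by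
    set F : Fin c.length → ℝ :=
      fun j => (GPk X k ε).w (c.get j) (c.get (finNext j)) with hF
    have hgs : ∀ j, ∃ z : ℤ,
        F j + ε * (if F j = -ε then (1:ℝ) else 0) = (z:ℝ) := by
      intro j
      by_cases hj : F j = -ε
      · exact ⟨0, by rw [if_pos hj, hj]; push_cast; ring⟩
      · rcases w_vals k ε (c.get j) (c.get (finNext j)) with hv | ⟨z, hz⟩
        · exact absurd hv hj
        · refine ⟨z, ?_⟩
          rw [if_neg hj]
          show (GPk X k ε).w (c.get j) (c.get (finNext j)) + ε * 0 = (z:ℝ)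
          rw [hz]; ring
    choose g hg using hgs
    set S := ∑ j, (if F j = -ε then (1:ℝ) else 0) with hS
    have hWeq : (GPk X k ε).cycleWeight c = (∑ j, (g j : ℝ)) - ε * S := by
      have h1' : ∑ j, (g j : ℝ)
          = ∑ j, (F j + ε * (if F j = -ε then (1:ℝ) else 0)) :=
        Finset.sum_congr rfl (fun j _ => (hg j).symm)
      rw [h1', hS, Finset.mul_sum, ← Finset.sum_sub_distrib]
      simp only [add_sub_cancel_right]
      rfl
    have hS2 : (2:ℝ) ≤ S := by
      have hp : ∑ j ∈ ({⟨iv, hilt⟩, finNext (finNext ⟨iv, hilt⟩)} :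
          Finset (Fin c.length)), (if F j = -ε then (1:ℝ) else 0) = 2 := by
        rw [Finset.sum_pair hj12, if_pos h1, if_pos h3]
        norm_num
      rw [hS, ← hp]
      refine Finset.sum_le_sum_of_subset_of_nonneg (Finset.subset_univ _) ?_
      intro j _ _
      split <;> norm_num
    have hSle : S ≤ (c.length : ℝ) := by
      rw [hS]
      calc ∑ j, (if F j = -ε then (1:ℝ) else 0) ≤ ∑ _j : Fin c.length, (1:ℝ) := by
            refine Finset.sum_le_sum ?_
            intro j _
            split <;> norm_num
        _ = (c.length : ℝ) := by simp
    have hLle : (c.length : ℝ) ≤ 2 * (Fintype.card X : ℝ) := by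
      have h1' := hnd.length_le_card
      rw [Fintype.card_sum] at h1'
      have : c.length ≤ 2 * Fintype.card X := by omega
      exact_mod_cast this
    have hεS : ε * S < 1 :=
      lt_of_le_of_lt (mul_le_mul_of_nonneg_left (hSle.trans hLle) hε0.le) hεcard
    have hgcast : ∑ j, (g j : ℝ) = ((∑ j, g j : ℤ) : ℝ) := by push_cast; rfl
    have hg0 : (∑ j, g j : ℤ) ≤ 0 := by
      by_contra hcon
      push_neg at hcon
      have h1' : (1:ℝ) ≤ ((∑ j, g j : ℤ) : ℝ) := by exact_mod_cast hcon
      rw [hWeq, hgcast] at hneg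
      linarith
    have hgle : ∑ j, (g j : ℝ) ≤ 0 := by
      rw [hgcast]
      exact_mod_cast hg0
    have h2S : ε * 2 ≤ ε * S := mul_le_mul_of_nonneg_left hS2 hε0.le
    rw [hWeq]
    linarith
  -- rotate the cycle
  set m := (iv + 1) % c.length with hm
  have hrc : (GPk X k ε).IsCycle (c.rotate m) :=
    isCycle_rotate _ _ _ ⟨hne, hnd, harc⟩
  have hrw : (GPk X k ε).cycleWeight (c.rotate m)
      = (GPk X k ε).cycleWeight c := cycleWeight_rotate _ _ _
  have hlen' : (c.rotate m).length = c.length := List.length_rotate c m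
  have hc'ne : c.rotate m ≠ [] := by
    intro hnil
    rw [hnil] at hlen'
    simp at hlen'
    omega
  -- the first three entries and the last entry of the rotated cycle
  have g0 : (c.rotate m)[0]? = some (Sum.inr a) := by
    rw [List.getElem?_eq_getElem (by omega)]
    refine congrArg some ?_
    rw [show ∀ (h : _), (c.rotate m)[(0:ℕ)]'h = (c.rotate m).get ⟨0, h⟩ from fun _ => rfl,
      List.get_rotate]
    show c.get ⟨(0 + m) % c.length, Nat.mod_lt _ hL⟩ = Sum.inr a
    have e : (⟨(0 + m) % c.length, Nat.mod_lt _ hL⟩ : Fin c.length)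
        = finNext ⟨iv, hilt⟩ := by
      apply Fin.ext
      show (0 + m) % c.length = (iv + 1) % c.length
      rw [Nat.zero_add, hm]
      exact Nat.mod_mod_of_dvd _ dvd_rfl
    rw [e]
    exact hu1
  have g1 : (c.rotate m)[1]? = some (Sum.inl c0) := by
    rw [List.getElem?_eq_getElem (by omega)]
    refine congrArg some ?_
    rw [show ∀ (h : _), (c.rotate m)[(1:ℕ)]'h = (c.rotate m).get ⟨1, h⟩ from fun _ => rfl,
      List.get_rotate]
    show c.get ⟨(1 + m) % c.length, Nat.mod_lt _ hL⟩ = Sum.inl c0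
    have e : (⟨(1 + m) % c.length, Nat.mod_lt _ hL⟩ : Fin c.length)
        = finNext (finNext ⟨iv, hilt⟩) := by
      apply Fin.ext
      rw [finNext2_val]
      show (1 + m) % c.length = (iv + 2) % c.length
      rw [hm, Nat.add_mod_mod]
      congr 1
      omega
    rw [e]
    exact hu2
  have g2 : (c.rotate m)[2]? = some (Sum.inr b) := by
    rw [List.getElem?_eq_getElem (by omega)]
    refine congrArg some ?_
    rw [show ∀ (h : _), (c.rotate m)[(2:ℕ)]'h = (c.rotate m).get ⟨2, h⟩ from fun _ => rfl,
      List.get_rotate]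
    show c.get ⟨(2 + m) % c.length, Nat.mod_lt _ hL⟩ = Sum.inr b
    have e : (⟨(2 + m) % c.length, Nat.mod_lt _ hL⟩ : Fin c.length)
        = finNext (finNext (finNext ⟨iv, hilt⟩)) := by
      apply Fin.ext
      rw [finNext3_val]
      show (2 + m) % c.length = (iv + 3) % c.length
      rw [hm, Nat.add_mod_mod]
      congr 1
      omega
    rw [e]
    exact hu3
  have g3 : (c.rotate m)[(c.rotate m).length - 1]? = some (Sum.inl d) := by
    rw [List.getElem?_eq_getElem (by omega)]
    refine congrArg some ?_
    rw [show ∀ (h : _), (c.rotate m)[(c.rotate m).length - 1]'h = (c.rotate m).get ⟨(c.rotate m).length - 1, h⟩ from fun _ => rfl,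
      List.get_rotate]
    show c.get ⟨((c.rotate m).length - 1 + m) % c.length, Nat.mod_lt _ hL⟩ = Sum.inl d
    have e : (⟨((c.rotate m).length - 1 + m) % c.length, Nat.mod_lt _ hL⟩
        : Fin c.length) = ⟨iv, hilt⟩ := by
      apply Fin.ext
      show ((c.rotate m).length - 1 + m) % c.length = iv
      rw [List.length_rotate, hm, Nat.add_mod_mod]
      have e2 : c.length - 1 + (iv + 1) = c.length + iv := by omega
      rw [e2, Nat.add_mod_left, Nat.mod_eq_of_lt hilt]
    rw [e]
    exact hu0
  -- destructure the rotated cycle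
  obtain ⟨x0, t0, e0⟩ := List.exists_cons_of_ne_nil hc'ne
  have ht0len : t0.length + 1 = c.length := by
    rw [← hlen', e0]; simp
  obtain ⟨x1, t1, e1⟩ := List.exists_cons_of_ne_nil
    (List.length_pos_iff.mp (by omega : 0 < t0.length))
  have ht1len : t1.length + 2 = c.length := by
    rw [← ht0len, e1]; simp
  obtain ⟨x2, t2, e2⟩ := List.exists_cons_of_ne_nil
    (List.length_pos_iff.mp (by omega : 0 < t1.length))
  have ht2len : t2.length + 3 = c.length := by
    rw [← ht1len, e2]; simp
  have ec : c.rotate m = x0 :: x1 :: x2 :: t2 := by rw [e0, e1, e2]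
  rw [ec] at g0 g1 g2 g3 hrc hrw
  simp only [List.getElem?_cons_zero, Option.some.injEq] at g0
  rw [List.getElem?_cons_succ] at g1
  simp only [List.getElem?_cons_zero, Option.some.injEq] at g1
  rw [List.getElem?_cons_succ, List.getElem?_cons_succ] at g2
  simp only [List.getElem?_cons_zero, Option.some.injEq] at g2
  subst g0
  subst g1
  subst g2
  have hidx : (Sum.inr a :: Sum.inl c0 :: Sum.inr b :: t2).length - 1
      = t2.length + 1 + 1 := by simp
  rw [hidx, List.getElem?_cons_succ, List.getElem?_cons_succ] at g3
  have hlast : (Sum.inr b :: t2).getLast (List.cons_ne_nil _ _) = Sum.inl d := by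
    rw [getLast_eq_get' (Sum.inr b :: t2) (List.cons_ne_nil _ _)
      ⟨t2.length, by simp⟩ (by simp)]
    rw [List.getElem?_eq_getElem (by simp)] at g3
    have hg := Option.some.inj g3
    rw [List.get_eq_getElem]
    exact hg
  -- the shortcut arc
  have hadjshort : (GPk X k ε).Adj
      ((Sum.inr b :: t2).getLast (List.cons_ne_nil _ _)) (Sum.inr b) := by
    rw [hlast]
    show b < d ∨ b = d
    exact Or.inl hbd
  have hst : (GPk X k ε).IsCycle (Sum.inr b :: t2) :=
    shorten_isCycle (GPk X k ε) (Sum.inr a) (Sum.inl c0) (Sum.inr b) t2 hrc hadjshort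
  -- weight of the shortened cycle
  have hwshort := shorten_cycleWeight (GPk X k ε) (Sum.inr a) (Sum.inl c0)
    (Sum.inr b) t2
  rw [hlast, hrw] at hwshort
  have w1 : (GPk X k ε).w (Sum.inr a) (Sum.inl c0) = 0 := by
    show (if a = c0 then (-1:ℝ) else 0) = 0
    rw [if_neg hac.1]
  have w2 : (GPk X k ε).w (Sum.inl c0) (Sum.inr b) = -ε := by
    show (if b = c0 then (k:ℝ) else -ε) = -ε
    rw [if_neg (ne_of_lt hbc)]
  have w3 : (GPk X k ε).w (Sum.inl d) (Sum.inr a) = -ε := by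
    show (if a = d then (k:ℝ) else -ε) = -ε
    rw [if_neg (ne_of_lt had)]
  have w4 : (GPk X k ε).w (Sum.inl d) (Sum.inr b) = -ε := by
    show (if b = d then (k:ℝ) else -ε) = -ε
    rw [if_neg (ne_of_lt hbd)]
  rw [w1, w2, w3, w4] at hwshort
  have hnewneg : (GPk X k ε).cycleWeight (Sum.inr b :: t2) < 0 := by
    rw [hwshort]
    linarith
  have hfin := hmin (Sum.inr b :: t2) hst hnewneg
  have hlc : (Sum.inr b :: t2 : List (X ⊕ X)).length = t2.length + 1 := by simp
  omega
end
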